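/- arXiv:2305.02921 — 8 statements merged into one kernel-verified Lean document; each statement's English description precedes it below -/
import Mathlib

section
/- Let I ⊆ M_m be a nonempty decreasing monomial set and let r = max_{f∈I} deg(f). Then the minimum Hamming weight of a nonzero codeword of the monomial code C(I) equals 2^{m−r}. -/
open Finset Pointwise

/-- Points of the affine space `F_2^m`. -/
abbrev Point (m : ℕ) := Fin m → ZMod 2

/-- The ring `R_m = F_2[x_0,…,x_{m-1}]/(x_i^2 - x_i)`, identified with the ring of
functions `F_2^m → F_2` via the evaluation isomorphism `ev`. -/
abbrev Fn (m : ℕ) := Point m → ZMod 2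

/-- The monomial `∏_{i ∈ S} x_i` (as the function it evaluates to). -/
def monFn (m : ℕ) (S : Finset (Fin m)) : Fn m := fun u => ∏ i ∈ S, u i

/-- Hamming weight of `ev(P)`: the number of points where `P` takes the value 1. -/
def wt (m : ℕ) (P : Fn m) : ℕ := (Finset.univ.filter fun u => P u = 1).card

/-- The monomial code `C(I)`: the `F_2`-span of the evaluations of the monomials in `I`. -/
def code (m : ℕ) (I : Set (Finset (Fin m))) : Submodule (ZMod 2) (Fn m) :=
  Submodule.span (ZMod 2) (monFn m '' I)

/-- `f ≼_sh g` for monomials of equal degree: the sorted index lists compare entrywise. -/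
def shLE (m : ℕ) (S T : Finset (Fin m)) : Prop :=
  S.card = T.card ∧
    ∀ (ℓ : ℕ) (hS : ℓ < (S.sort (· ≤ ·)).length) (hT : ℓ < (T.sort (· ≤ ·)).length),
      (S.sort (· ≤ ·)).get ⟨ℓ, hS⟩ ≤ (T.sort (· ≤ ·)).get ⟨ℓ, hT⟩

/-- `f ≼ g` iff there is a monomial `g*` with `f ≼_sh g* ≼_w g`. -/
def pre (m : ℕ) (S T : Finset (Fin m)) : Prop :=
  ∃ U : Finset (Fin m), shLE m S U ∧ U ⊆ T

/-- A decreasing set of monomials. -/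
def Decreasing (m : ℕ) (I : Set (Finset (Fin m))) : Prop :=
  ∀ f ∈ I, ∀ g : Finset (Fin m), pre m g f → g ∈ I

/-- The affine map `u ↦ B u + ε` on `F_2^m`. -/
def affMap (m : ℕ) (B : Fin m → Fin m → ZMod 2) (ε : Point m) (u : Point m) : Point m :=
  fun i => (∑ j, B i j * u j) + ε i

/-- `B` is lower triangular with unit diagonal. -/
def IsLT (m : ℕ) (B : Fin m → Fin m → ZMod 2) : Prop :=
  (∀ i, B i i = 1) ∧ ∀ i j : Fin m, i < j → B i j = 0

/-- The action of `(B,ε) ∈ LTA(m,2)` on `R_m`: substitute `x_i ↦ x_i + Σ_{j<i} b_{i,j} x_j + ε_i`.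
In the function representation this is precomposition with the affine map. -/
def act (m : ℕ) (B : Fin m → Fin m → ZMod 2) (ε : Point m) (P : Fn m) : Fn m :=
  fun u => P (affMap m B ε u)

/-- The orbit `LTA(m,2)·P`. -/
def orbit (m : ℕ) (P : Fn m) : Set (Fn m) :=
  {Q | ∃ B ε, IsLT m B ∧ Q = act m B ε P}

/-- Membership in the subgroup `LTA(m,2)_g` for the monomial `g` with index set `S`:
`ε_i = 0` if `i ∉ ind(g)`, and `b_{i,j} = 0` (off the diagonal) if `i ∉ ind(g)` or `j ∈ ind(g)`. -/
def IsLTsub (m : ℕ) (S : Finset (Fin m)) (B : Fin m → Fin m → ZMod 2) (ε : Point m) : Prop :=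
  IsLT m B ∧ (∀ i, i ∉ S → ε i = 0) ∧
    ∀ i j : Fin m, j ≠ i → (i ∉ S ∨ j ∈ S) → B i j = 0

/-- The orbit `LTA(m,2)_g · P` where `S = ind(g)`. -/
def orbitSub (m : ℕ) (S : Finset (Fin m)) (P : Fn m) : Set (Fn m) :=
  {Q | ∃ B ε, IsLTsub m S B ε ∧ Q = act m B ε P}

/-- `λ_f(i) = |{j : j < i, j ∉ ind(f)}|` where `S = ind(f)`. -/
def lam (m : ℕ) (S : Finset (Fin m)) (i : Fin m) : ℕ :=
  (Finset.univ.filter fun j => j < i ∧ j ∉ S).card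

/-- `|λ_f(g)| = Σ_{i ∈ ind(g)} λ_f(i)`. -/
def lamSum (m : ℕ) (S T : Finset (Fin m)) : ℕ := ∑ i ∈ T, lam m S i

/-- The affine form `c + Σ_i a_i x_i`. -/
def affForm (m : ℕ) (c : ZMod 2) (a : Point m) : Fn m := fun u => c + ∑ i, a i * u i

/-- `deg(P) ≤ r`: `P` lies in the span of the (multilinear) monomials of degree at most `r`. -/
def degLE (m : ℕ) (P : Fn m) (r : ℕ) : Prop :=
  P ∈ Submodule.span (ZMod 2)
    {Q : Fn m | ∃ S : Finset (Fin m), S.card ≤ r ∧ Q = monFn m S}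



def monG (σ : Type) [DecidableEq σ] (S : Finset σ) : (σ → ZMod 2) → ZMod 2 :=
  fun u => ∏ i ∈ S, u i

def wtG (σ : Type) [Fintype σ] [DecidableEq σ] (P : (σ → ZMod 2) → ZMod 2) : ℕ :=
  (Finset.univ.filter fun u => P u = 1).card

section Aux
variable {σ : Type} [Fintype σ] [DecidableEq σ]

def extPt (a : σ) (u : {x : σ // x ≠ a} → ZMod 2) (b : ZMod 2) : σ → ZMod 2 :=
  fun x => if h : x = a then b else u ⟨x, h⟩

def resL (a : σ) (b : ZMod 2) :
    ((σ → ZMod 2) → ZMod 2) →ₗ[ZMod 2] (({x : σ // x ≠ a} → ZMod 2) → ZMod 2) where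
  toFun P := fun u => P (extPt a u b)
  map_add' := fun _ _ => rfl
  map_smul' := fun _ _ => rfl

omit [Fintype σ] in
lemma extPt_restr (a : σ) (v : σ → ZMod 2) :
    extPt a (fun x : {x : σ // x ≠ a} => v x.1) (v a) = v := by
  funext x
  unfold extPt
  split
  · subst ‹x = a›; rfl
  · rfl

def splitEquiv (a : σ) : (({x : σ // x ≠ a} → ZMod 2) × ZMod 2) ≃ (σ → ZMod 2) where
  toFun p := extPt a p.1 p.2
  invFun v := (fun x => v x.1, v a)
  left_inv p := by
    ext x
    · simp [extPt, x.2]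
    · simp [extPt]
  right_inv v := extPt_restr a v

lemma wt_split (a : σ) (P : (σ → ZMod 2) → ZMod 2) :
    wtG σ P = wtG _ (resL a 0 P) + wtG _ (resL a 1 P) := by
  classical
  have huniv : (Finset.univ : Finset (ZMod 2)) = {0, 1} := by decide
  unfold wtG
  rw [Finset.card_filter, Finset.card_filter, Finset.card_filter]
  rw [← Equiv.sum_comp (splitEquiv a) (fun v => if P v = 1 then 1 else 0)]
  rw [Fintype.sum_prod_type]
  rw [Finset.sum_comm]
  rw [huniv, Finset.sum_pair (by decide : (0 : ZMod 2) ≠ 1)]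
  rfl

omit [Fintype σ] in
lemma mon_subtype (a : σ) (b : ZMod 2) (S : Finset σ) (u : {x : σ // x ≠ a} → ZMod 2) :
    monG _ (S.subtype (· ≠ a)) u = ∏ x ∈ S.filter (· ≠ a), extPt a u b x := by
  unfold monG
  rw [← Finset.prod_subtype_eq_prod_filter]
  refine Finset.prod_congr rfl fun x _ => ?_
  simp [extPt, x.2]

omit [Fintype σ] in
lemma res_mon_not_mem (a : σ) (b : ZMod 2) (S : Finset σ) (ha : a ∉ S) :
    resL a b (monG σ S) = monG _ (S.subtype (· ≠ a)) := by
  funext u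
  rw [mon_subtype a b, Finset.filter_true_of_mem (fun x hx => ne_of_mem_of_not_mem hx ha)]
  rfl

omit [Fintype σ] in
lemma res_mon_mem (a : σ) (b : ZMod 2) (S : Finset σ) (ha : a ∈ S) :
    resL a b (monG σ S) = fun u => b * monG _ (S.subtype (· ≠ a)) u := by
  funext u
  rw [mon_subtype a b, Finset.filter_ne']
  show ∏ x ∈ S, extPt a u b x = b * ∏ x ∈ S.erase a, extPt a u b x
  rw [← Finset.mul_prod_erase S _ ha]
  congr 1
  simp [extPt]

omit [Fintype σ] in
lemma card_subtype_not_mem (a : σ) (S : Finset σ) (ha : a ∉ S) :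
    (S.subtype (· ≠ a)).card = S.card := by
  rw [Finset.card_subtype, Finset.filter_true_of_mem (fun x hx => ne_of_mem_of_not_mem hx ha)]

omit [Fintype σ] in
lemma card_subtype_mem (a : σ) (S : Finset σ) (ha : a ∈ S) :
    (S.subtype (· ≠ a)).card + 1 = S.card := by
  rw [Finset.card_subtype, Finset.filter_ne', Finset.card_erase_of_mem ha]
  have : 0 < S.card := Finset.card_pos.mpr ⟨a, ha⟩
  omega

end Aux

lemma wt_pos_of_ne_zero {σ : Type} [Fintype σ] [DecidableEq σ]
    {P : (σ → ZMod 2) → ZMod 2} (hP : P ≠ 0) : 1 ≤ wtG σ P := by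
  rw [Function.ne_iff] at hP
  obtain ⟨v, hv⟩ := hP
  have hv1 : P v = 1 := by
    have : ∀ c : ZMod 2, c ≠ 0 → c = 1 := by decide
    exact this _ hv
  exact Finset.card_pos.mpr ⟨v, Finset.mem_filter.mpr ⟨Finset.mem_univ v, hv1⟩⟩

lemma key : ∀ (n : ℕ) (σ : Type) [Fintype σ] [DecidableEq σ] (r : ℕ)
    (P : (σ → ZMod 2) → ZMod 2), Fintype.card σ = n →
    P ∈ Submodule.span (ZMod 2) {Q | ∃ S : Finset σ, S.card ≤ r ∧ Q = monG σ S} →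
    P ≠ 0 → 2 ^ (n - r) ≤ wtG σ P := by
  intro n
  induction n with
  | zero =>
    intro σ _ _ r P _ _ hP
    simpa using wt_pos_of_ne_zero hP
  | succ n IH =>
    intro σ _ _ r P hcard hspan hP
    have : 0 < Fintype.card σ := by omega
    obtain ⟨a⟩ := Fintype.card_pos_iff.mp this
    set σ' := {x : σ // x ≠ a}
    have hcard' : Fintype.card σ' = n := by
      have := Fintype.card_subtype_compl (p := fun x => x = a)
      simp only [Fintype.card_subtype_eq] at this
      simpa [σ', hcard] using this
    -- degrees of restrictions
    have hres : ∀ b : ZMod 2, resL a b P ∈ Submodule.span (ZMod 2)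
        {Q | ∃ S : Finset σ', S.card ≤ r ∧ Q = monG σ' S} := by
      intro b
      have h1 : resL a b P ∈ Submodule.span (ZMod 2)
          ((resL a b) '' {Q | ∃ S : Finset σ, S.card ≤ r ∧ Q = monG σ S}) :=
        Submodule.apply_mem_span_image_of_mem_span _ hspan
      refine Submodule.span_le.mpr ?_ h1
      rintro _ ⟨_, ⟨S, hSr, rfl⟩, rfl⟩
      by_cases ha : a ∈ S
      · rw [res_mon_mem a b S ha]
        rcases (show ∀ c : ZMod 2, c = 0 ∨ c = 1 by decide) b with hb | hb
        · subst hb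
          have hz : (fun u => (0 : ZMod 2) * monG σ' (S.subtype (· ≠ a)) u) = 0 := by
            funext u; simp
          rw [hz]
          exact Submodule.zero_mem _
        · subst hb
          refine Submodule.subset_span ⟨S.subtype (· ≠ a), ?_, ?_⟩
          · have := card_subtype_mem a S ha; omega
          · funext u; simp; rfl
      · rw [res_mon_not_mem a b S ha]
        exact Submodule.subset_span ⟨S.subtype (· ≠ a), by rw [card_subtype_not_mem a S ha]; exact hSr, rfl⟩
    set Q := resL a 0 P + resL a 1 P with hQdef
    have hQspan : Q ∈ Submodule.span (ZMod 2)
        {R | ∃ S : Finset σ', S.card + 1 ≤ r ∧ R = monG σ' S} := by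
      have h1 : Q ∈ Submodule.span (ZMod 2)
          ((resL a 0 + resL a 1) '' {R | ∃ S : Finset σ, S.card ≤ r ∧ R = monG σ S}) :=
        Submodule.apply_mem_span_image_of_mem_span (resL a 0 + resL a 1) hspan
      refine Submodule.span_le.mpr ?_ h1
      rintro _ ⟨_, ⟨S, hSr, rfl⟩, rfl⟩
      by_cases ha : a ∈ S
      · have e0 := res_mon_mem a 0 S ha
        have e1 := res_mon_mem a 1 S ha
        have : (resL a 0 + resL a 1) (monG σ S) = monG σ' (S.subtype (· ≠ a)) := by
          show resL a 0 (monG σ S) + resL a 1 (monG σ S) = _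
          rw [e0, e1]; funext u; simp; rfl
        rw [this]
        refine Submodule.subset_span ⟨S.subtype (· ≠ a), ?_, rfl⟩
        rw [card_subtype_mem a S ha]; exact hSr
      · have e0 := res_mon_not_mem a 0 S ha
        have e1 := res_mon_not_mem a 1 S ha
        have : (resL a 0 + resL a 1) (monG σ S) = 0 := by
          show resL a 0 (monG σ S) + resL a 1 (monG σ S) = 0
          rw [e0, e1]; funext u
          show monG σ' _ u + monG σ' _ u = 0
          exact CharTwo.add_self_eq_zero _
        rw [this]
        exact Submodule.zero_mem _
    have hwt : wtG σ P = wtG σ' (resL a 0 P) + wtG σ' (resL a 1 P) := wt_split a P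
    by_cases hQ : Q = 0
    · -- res0 = res1, both nonzero
      have heq : resL a 0 P = resL a 1 P := by
        funext u
        have : resL a 0 P u + resL a 1 P u = 0 := congrFun hQ u
        exact (show ∀ x y : ZMod 2, x + y = 0 → x = y by decide) _ _ this
      have hres0 : resL a 0 P ≠ 0 := by
        intro h0
        apply hP
        funext v
        have hv : P v = resL a (v a) P (fun x : σ' => v x.1) := by
          show P v = P (extPt a _ (v a))
          rw [extPt_restr]
        rcases (show ∀ c : ZMod 2, c = 0 ∨ c = 1 by decide) (v a) with hb | hb <;> rw [hb] at hv
        · rw [hv, h0]; rfl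
        · rw [hv, ← heq, h0]; rfl
      have hIH := IH σ' r (resL a 0 P) hcard' (hres 0) hres0
      calc 2 ^ (n + 1 - r) ≤ 2 ^ (n - r + 1) := Nat.pow_le_pow_right (by norm_num) (by omega)
        _ = 2 ^ (n - r) + 2 ^ (n - r) := by ring
        _ ≤ wtG σ' (resL a 0 P) + wtG σ' (resL a 1 P) := by rw [← heq]; omega
        _ = wtG σ P := hwt.symm
    · -- Q ≠ 0, so r ≥ 1 and Q has degree ≤ r - 1
      have hr1 : 1 ≤ r := by
        by_contra hr
        have hr0 : r = 0 := by omega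
        apply hQ
        have : {R | ∃ S : Finset σ', S.card + 1 ≤ r ∧ R = monG σ' S} = ∅ := by
          ext R; simp [hr0]
        rw [this, Submodule.span_empty, Submodule.mem_bot] at hQspan
        exact hQspan
      have hQspan' : Q ∈ Submodule.span (ZMod 2)
          {R | ∃ S : Finset σ', S.card ≤ r - 1 ∧ R = monG σ' S} := by
        refine Submodule.span_mono ?_ hQspan
        rintro R ⟨S, hS, rfl⟩
        exact ⟨S, by omega, rfl⟩
      have hIH := IH σ' (r - 1) Q hcard' hQspan' hQ
      have hWQ : wtG σ' Q ≤ wtG σ' (resL a 0 P) + wtG σ' (resL a 1 P) := by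
        unfold wtG
        calc (Finset.univ.filter fun u => Q u = 1).card
            ≤ ((Finset.univ.filter fun u => resL a 0 P u = 1) ∪
               (Finset.univ.filter fun u => resL a 1 P u = 1)).card := by
              apply Finset.card_le_card
              intro u hu
              rw [Finset.mem_filter] at hu
              have h1 : resL a 0 P u + resL a 1 P u = 1 := hu.2
              have : resL a 0 P u = 1 ∨ resL a 1 P u = 1 := by
                have : ∀ x y : ZMod 2, x + y = 1 → x = 1 ∨ y = 1 := by decide
                exact this _ _ h1
              rcases this with h | h
              · exact Finset.mem_union_left _ (Finset.mem_filter.mpr ⟨Finset.mem_univ u, h⟩)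
              · exact Finset.mem_union_right _ (Finset.mem_filter.mpr ⟨Finset.mem_univ u, h⟩)
          _ ≤ _ := Finset.card_union_le _ _
      have : n - (r - 1) = n + 1 - r := by omega
      rw [this] at hIH
      omega

lemma wt_monG (m : ℕ) (S : Finset (Fin m)) :
    wtG (Fin m) (monG (Fin m) S) = 2 ^ (m - S.card) := by
  classical
  have hiff : ∀ v : Fin m → ZMod 2, monG (Fin m) S v = 1 ↔ ∀ i ∈ S, v i = 1 := by
    intro v
    constructor
    · intro h i hi
      by_contra hvi
      have hv0 : v i = 0 := (show ∀ c : ZMod 2, c ≠ 1 → c = 0 by decide) _ hvi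
      have : monG (Fin m) S v = 0 := Finset.prod_eq_zero hi hv0
      rw [this] at h
      exact (show (0 : ZMod 2) ≠ 1 by decide) h
    · intro h
      exact Finset.prod_eq_one h
  have hcard : (Finset.univ.filter fun v : Fin m → ZMod 2 => monG (Fin m) S v = 1).card =
      (Finset.univ : Finset ({x : Fin m // x ∉ S} → ZMod 2)).card := by
    apply Finset.card_nbij' (fun v => fun x => v x.1)
      (fun g => fun i => if h : i ∈ S then 1 else g ⟨i, h⟩)
    · intro v _
      exact Finset.mem_univ _
    · intro g _
      refine Finset.mem_filter.mpr ⟨Finset.mem_univ _, (hiff _).mpr fun i hi => ?_⟩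
      simp [hi]
    · intro v hv
      rw [Finset.mem_coe, Finset.mem_filter] at hv
      have hv1 := (hiff v).mp hv.2
      funext i
      by_cases hi : i ∈ S
      · simp [hi, (hv1 i hi).symm]
      · simp [hi]
    · intro g _
      funext x
      simp [x.2]
  rw [wtG, hcard, Finset.card_univ, Fintype.card_fun]
  have : Fintype.card {x : Fin m // x ∉ S} = m - S.card := by
    rw [Fintype.card_subtype]
    have : Finset.univ.filter (fun x : Fin m => x ∉ S) = Sᶜ := by
      ext x; simp
    rw [this, Finset.card_compl, Fintype.card_fin]
  rw [this, ZMod.card]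

lemma monG_ne_zero (m : ℕ) (S : Finset (Fin m)) : monG (Fin m) S ≠ 0 := by
  intro h
  have := congrFun h (fun _ => 1)
  rw [show monG (Fin m) S (fun _ => 1) = 1 from Finset.prod_eq_one fun _ _ => rfl] at this
  exact (show (1 : ZMod 2) ≠ 0 by decide) this

/-- For a nonempty decreasing monomial set `I` with `r = max_{f∈I} deg f`,
the minimum Hamming weight of a nonzero codeword of `C(I)` equals `2^(m-r)`. -/
theorem stmt0 (m : ℕ) (hm : 1 ≤ m) (I : Set (Finset (Fin m))) (hne : I.Nonempty)
    (hdec : Decreasing m I) (r : ℕ) (hub : ∀ f ∈ I, f.card ≤ r)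
    (hmax : ∃ f ∈ I, f.card = r) :
    IsLeast {w : ℕ | ∃ c ∈ code m I, c ≠ 0 ∧ wt m c = w} (2 ^ (m - r)) := by
  obtain ⟨f, hfI, hfr⟩ := hmax
  constructor
  · refine ⟨monFn m f, Submodule.subset_span ⟨f, hfI, rfl⟩, monG_ne_zero m f, ?_⟩
    show wtG (Fin m) (monG (Fin m) f) = 2 ^ (m - r)
    rw [wt_monG, hfr]
  · rintro w ⟨c, hc, hc0, rfl⟩
    have hdeg : c ∈ Submodule.span (ZMod 2)
        {Q | ∃ S : Finset (Fin m), S.card ≤ r ∧ Q = monG (Fin m) S} := by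
      refine Submodule.span_le.mpr ?_ hc
      rintro _ ⟨S, hS, rfl⟩
      exact Submodule.subset_span ⟨S, hub S hS, rfl⟩
    exact key m (Fin m) r c (Fintype.card_fin m) hdeg hc0
end

section
/- For every monomial f ∈ M_m, the orbit of f under the full group LTA(m,2) coincides with its orbit under the subgroup LTA(m,2)_f, i.e. LTA(m,2)·f = LTA(m,2)_f·f. -/
open Finset Pointwise

lemma zmod2_ne_zero' : ∀ a : ZMod 2, a ≠ 0 → a = 1 := by decide

lemma zmod2_ne_zero {a : ZMod 2} (h : a ≠ 0) : a = 1 := zmod2_ne_zero' a h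

lemma zmod2_key (a b : ZMod 2) : (a + b + 1) * b = a * b := by revert a b; decide

/-- swap one factor of a product over S for an equivalent one modulo another factor -/
lemma step_prod (m : ℕ) (S : Finset (Fin m)) (i j : Fin m) (hi : i ∈ S) (hj : j ∈ S)
    (hij : j ≠ i) (f g : Fin m → ZMod 2) (hgi : g i = f i + f j + 1)
    (hg : ∀ k, k ≠ i → g k = f k) :
    ∏ k ∈ S, g k = ∏ k ∈ S, f k := by
  have hjmem : j ∈ S.erase i := Finset.mem_erase.mpr ⟨hij, hj⟩
  rw [← Finset.mul_prod_erase S g hi, ← Finset.mul_prod_erase S f hi,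
      ← Finset.mul_prod_erase _ g hjmem, ← Finset.mul_prod_erase _ f hjmem]
  have hrest : ∏ k ∈ (S.erase i).erase j, g k = ∏ k ∈ (S.erase i).erase j, f k :=
    Finset.prod_congr rfl fun k hk =>
      hg k (Finset.ne_of_mem_erase (Finset.mem_of_mem_erase hk))
  rw [hrest, hgi, hg j hij, ← mul_assoc, ← mul_assoc, zmod2_key]

/-- the bad set: entries of `B` inside `S × S` below the diagonal that are nonzero -/
def badSet (m : ℕ) (S : Finset (Fin m)) (B : Fin m → Fin m → ZMod 2) :
    Finset (Fin m × Fin m) :=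
  Finset.univ.filter fun p : Fin m × Fin m =>
    p.1 ∈ S ∧ p.2 ∈ S ∧ p.2 < p.1 ∧ B p.1 p.2 ≠ 0

lemma sum_range_two_pow (n : ℕ) : ∑ k ∈ Finset.range n, 2 ^ k = 2 ^ n - 1 := by
  induction n with
  | zero => simp
  | succ n ih =>
    rw [Finset.sum_range_succ, ih, pow_succ]
    have : 1 ≤ 2 ^ n := Nat.one_le_two_pow
    omega

/-- final step: when there are no bad entries, clean up the irrelevant rows. -/
lemma reduce_done (m : ℕ) (S : Finset (Fin m)) (B : Fin m → Fin m → ZMod 2) (ε : Point m)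
    (hB : IsLT m B)
    (hbad : ∀ i j : Fin m, i ∈ S → j ∈ S → j < i → B i j = 0) :
    ∃ B' ε', IsLTsub m S B' ε' ∧
      ∀ u : Point m, ∏ i ∈ S, ((∑ j, B i j * u j) + ε i)
        = ∏ i ∈ S, ((∑ j, B' i j * u j) + ε' i) := by
  refine ⟨fun i j => if i = j then 1 else if i ∈ S ∧ j ∉ S then B i j else 0,
    fun i => if i ∈ S then ε i else 0, ⟨⟨fun i => by simp, fun i j hij => ?_⟩, ?_, ?_⟩, ?_⟩
  · have hne : i ≠ j := ne_of_lt hij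
    simp only [if_neg hne]
    split
    · exact hB.2 i j hij
    · rfl
  · intro i hi; simp [hi]
  · intro i j hji hcond
    have hne : i ≠ j := fun h => hji h.symm
    simp only [if_neg hne]
    rcases hcond with h | h
    · simp [h]
    · simp [h]
  · intro u
    refine Finset.prod_congr rfl fun i hi => ?_
    have h1 : ∀ j : Fin m,
        (if i = j then 1 else if i ∈ S ∧ j ∉ S then B i j else 0) = B i j := by
      intro j
      by_cases hij : i = j
      · subst hij; simp [hB.1 i]
      · rw [if_neg hij]
        by_cases hjS : j ∈ S
        · rw [if_neg (by simp [hjS])]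
          rcases lt_trichotomy j i with h | h | h
          · exact (hbad i j hi hjS h).symm
          · exact absurd h.symm hij
          · exact (hB.2 i j h).symm
        · rw [if_pos ⟨hi, hjS⟩]
    simp only [h1, if_pos hi]

lemma reduce (m : ℕ) (S : Finset (Fin m)) :
    ∀ (μ : ℕ) (B : Fin m → Fin m → ZMod 2) (ε : Point m), IsLT m B →
    (∑ p ∈ badSet m S B, 2 ^ (p.2 : ℕ)) ≤ μ →
    ∃ B' ε', IsLTsub m S B' ε' ∧
      ∀ u : Point m, ∏ i ∈ S, ((∑ j, B i j * u j) + ε i)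
        = ∏ i ∈ S, ((∑ j, B' i j * u j) + ε' i) := by
  intro μ
  induction μ with
  | zero =>
    intro B ε hB hμ
    refine reduce_done m S B ε hB fun i j hi hj hlt => ?_
    by_contra hne
    have hp : (i, j) ∈ badSet m S B := by
      simp [badSet, hi, hj, hlt, hne]
    have h1 : (0 : ℕ) < 2 ^ (j : ℕ) := Nat.pow_pos (by norm_num)
    have h2 : 2 ^ (j : ℕ) ≤ ∑ p ∈ badSet m S B, 2 ^ (p.2 : ℕ) := by
      simpa using Finset.single_le_sum (f := fun p : Fin m × Fin m => 2 ^ (p.2 : ℕ))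
        (fun _ _ => Nat.zero_le _) hp
    omega
  | succ μ ih =>
    intro B ε hB hμ
    rcases Finset.eq_empty_or_nonempty (badSet m S B) with hemp | ⟨p, hp⟩
    · refine reduce_done m S B ε hB fun i j hi hj hlt => ?_
      by_contra hne
      have hpmem : (i, j) ∈ badSet m S B := by simp [badSet, hi, hj, hlt, hne]
      rw [hemp] at hpmem
      exact absurd hpmem (Finset.notMem_empty _)
    · obtain ⟨i, j⟩ := p
      obtain ⟨hi, hj, hlt, hne⟩ := (Finset.mem_filter.mp hp).2
      have hBij : B i j = 1 := zmod2_ne_zero hne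
      have hBji : B j i = 0 := hB.2 j i hlt
      set B₂ : Fin m → Fin m → ZMod 2 :=
        fun r c => if r = i then B i c + B j c else B r c with hB₂def
      set ε₂ : Point m := fun r => if r = i then ε i + ε j + 1 else ε r with hε₂def
      have hB₂val : ∀ c, B₂ i c = B i c + B j c := fun c => by simp [hB₂def]
      have hB₂val' : ∀ r c, r ≠ i → B₂ r c = B r c := fun r c hr => by simp [hB₂def, hr]
      have hB₂ : IsLT m B₂ := by
        constructor
        · intro r
          by_cases hr : r = i
          · rw [hr, hB₂val, hB.1 i, hBji, add_zero]
          · rw [hB₂val' r r hr]; exact hB.1 r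
        · intro r c hrc
          by_cases hr : r = i
          · rw [hr] at hrc ⊢
            rw [hB₂val, hB.2 i c hrc, hB.2 j c (lt_trans hlt hrc), add_zero]
          · rw [hB₂val' r c hr]; exact hB.2 r c hrc
      have hsub : badSet m S B₂ ⊆ (badSet m S B).erase (i, j) ∪
          ((Finset.univ.filter fun c : Fin m => c < j).image fun c => (i, c)) := by
        intro q hq
        obtain ⟨hq1, hq2, hqlt, hqne⟩ := (Finset.mem_filter.mp hq).2
        by_cases hr : q.1 = i
        · rcases lt_trichotomy q.2 j with h | h | h
          · refine Finset.mem_union_right _ ?_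
            refine Finset.mem_image.mpr ⟨q.2, by simp [h], ?_⟩
            rw [← hr]
          · exfalso
            apply hqne
            rw [hr, hB₂val, h, hBij, hB.1 j]
            decide
          · have hBj0 : B j q.2 = 0 := hB.2 j q.2 h
            refine Finset.mem_union_left _ (Finset.mem_erase.mpr ⟨?_, ?_⟩)
            · intro hqp
              rw [hqp] at h
              exact lt_irrefl _ h
            · refine Finset.mem_filter.mpr ⟨Finset.mem_univ _, hq1, hq2, hqlt, ?_⟩
              rw [hr, hB₂val, hBj0, add_zero] at hqne
              rw [hr]
              exact hqne
        · refine Finset.mem_union_left _ (Finset.mem_erase.mpr ⟨?_, ?_⟩)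
          · intro hqp
            exact hr (by rw [hqp])
          · refine Finset.mem_filter.mpr ⟨Finset.mem_univ _, hq1, hq2, hqlt, ?_⟩
            rwa [hB₂val' q.1 q.2 hr] at hqne
      have hmeas : (∑ q ∈ badSet m S B₂, 2 ^ (q.2 : ℕ)) ≤ μ := by
        have h1 : (∑ q ∈ badSet m S B₂, 2 ^ (q.2 : ℕ)) ≤
            ∑ q ∈ (badSet m S B).erase (i, j) ∪
              ((Finset.univ.filter fun c : Fin m => c < j).image fun c => (i, c)),
              2 ^ (q.2 : ℕ) :=
          Finset.sum_le_sum_of_subset hsub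
        have h2 := Finset.sum_union_inter
          (s₁ := (badSet m S B).erase (i, j))
          (s₂ := (Finset.univ.filter fun c : Fin m => c < j).image fun c => (i, c))
          (f := fun q : Fin m × Fin m => 2 ^ (q.2 : ℕ))
        have h3 : (∑ q ∈ ((Finset.univ.filter fun c : Fin m => c < j).image
              fun c => (i, c)), 2 ^ (q.2 : ℕ)) = ∑ c ∈ Finset.univ.filter
              (fun c : Fin m => c < j), 2 ^ (c : ℕ) := by
          rw [Finset.sum_image]
          intro x _ y _ h
          exact ((Prod.mk.injEq _ _ _ _).mp h).2
        have h4 : (∑ c ∈ Finset.univ.filter (fun c : Fin m => c < j), 2 ^ (c : ℕ)) ≤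
            2 ^ (j : ℕ) - 1 := by
          rw [← sum_range_two_pow]
          rw [show (∑ c ∈ Finset.univ.filter (fun c : Fin m => c < j), 2 ^ (c : ℕ))
              = ∑ k ∈ (Finset.univ.filter (fun c : Fin m => c < j)).image Fin.val,
                2 ^ k from (Finset.sum_image fun x _ y _ h => Fin.val_injective h).symm]
          refine Finset.sum_le_sum_of_subset ?_
          intro k hk
          obtain ⟨c, hc, hck⟩ := Finset.mem_image.mp hk
          have : c < j := (Finset.mem_filter.mp hc).2
          exact Finset.mem_range.mpr (hck ▸ this)
        have h5 : 2 ^ (j : ℕ) + (∑ q ∈ (badSet m S B).erase (i, j), 2 ^ (q.2 : ℕ))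
            = ∑ q ∈ badSet m S B, 2 ^ (q.2 : ℕ) := by
          have := Finset.add_sum_erase (badSet m S B)
            (fun q : Fin m × Fin m => 2 ^ (q.2 : ℕ)) hp
          simpa using this
        have h6 : 1 ≤ 2 ^ (j : ℕ) := Nat.one_le_two_pow
        omega
      obtain ⟨B', ε', hsub', heq⟩ := ih B₂ ε₂ hB₂ hmeas
      refine ⟨B', ε', hsub', fun u => ?_⟩
      rw [← heq u]
      refine Eq.symm (step_prod m S i j hi hj (ne_of_lt hlt)
        (fun k => (∑ c, B k c * u c) + ε k)
        (fun k => (∑ c, B₂ k c * u c) + ε₂ k) ?_ ?_)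
      · simp only [hB₂val, hε₂def, if_pos rfl, add_mul, Finset.sum_add_distrib]
        ring
      · intro k hk
        simp only [hB₂def, hε₂def, if_neg hk]

/-- For every monomial `f`, `LTA(m,2)·f = LTA(m,2)_f·f`. -/
theorem stmt1 (m : ℕ) (hm : 1 ≤ m) (S : Finset (Fin m)) :
    orbit m (monFn m S) = orbitSub m S (monFn m S) := by
  ext Q
  constructor
  · rintro ⟨B, ε, hB, rfl⟩
    obtain ⟨B', ε', hsub, heq⟩ := reduce m S (∑ p ∈ badSet m S B, 2 ^ (p.2 : ℕ)) B ε hB le_rfl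
    exact ⟨B', ε', hsub, funext fun u => heq u⟩
  · rintro ⟨B, ε, hsub, rfl⟩
    exact ⟨B, ε, hsub.1, rfl⟩
end

section
/- For every monomial f ∈ M_m, the action of LTA(m,2)_f on f is free: the map (B,ε) ↦ (B,ε)·f from LTA(m,2)_f to R_m is injective, i.e. no polynomial in the orbit LTA(m,2)_f·f is fixed by more than one group element (the identity). -/
open Finset Pointwise

/-
For `(B, ε) ∈ LTA(m,2)_f` with `S = ind(f)`, the substitution sends `x_i` (`i ∈ S`) to
`x_i + c_i(x)`, where the offset `c_i(x) = Σ_{j ∉ S} b_{i,j} x_j + ε_i` only involves the variables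
outside `S`, and fixes the other variables. Hence `(B, ε)·f` takes the value 1 exactly on the graph
`{x : x_i = c_i(x) + 1 for i ∈ S}` of an affine map `F_2^{Sᶜ} → F_2^S`. Equal images of `f` have
equal graphs, so the offsets agree as affine maps; comparing them at `0` and at the unit vectors
`e_j`, `j ∉ S`, recovers `ε` and the only free entries `b_{i,j}` (`i ∈ S`, `j ∉ S`).
-/

lemma ZMod.two_prod_eq_one_iff {ι : Type*} (s : Finset ι) (f : ι → ZMod 2) :
    ∏ i ∈ s, f i = 1 ↔ ∀ i ∈ s, f i = 1 := by
  have eq_one_iff : ∀ a : ZMod 2, a = 1 ↔ a ≠ 0 := by decide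
  simp only [eq_one_iff, Finset.prod_ne_zero_iff]

section Offset

variable {m : ℕ} {S : Finset (Fin m)} {B B' : Fin m → Fin m → ZMod 2} {ε ε' : Point m}

def offset (S : Finset (Fin m)) (B : Fin m → Fin m → ZMod 2) (ε : Point m) (u : Point m)
    (i : Fin m) : ZMod 2 :=
  ∑ j ∈ Sᶜ, B i j * u j + ε i

lemma offset_congr {u v : Point m} (huv : ∀ j ∉ S, u j = v j) :
    offset S B ε u = offset S B ε v := by
  funext i
  refine congrArg (· + ε i) (Finset.sum_congr rfl fun j hj => ?_)
  rw [huv j (Finset.mem_compl.mp hj)]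

lemma offset_zero : offset S B ε 0 = ε := by
  funext i
  simp [offset]

lemma offset_single {i j : Fin m} (hj : j ∉ S) :
    offset S B ε (Pi.single j 1) i = B i j + ε i := by
  rw [offset, Finset.sum_eq_single_of_mem j (Finset.mem_compl.mpr hj)]
  · simp
  · intro k _ hkj
    simp [hkj]

lemma affMap_apply_of_mem (hB : IsLTsub m S B ε) (u : Point m) {i : Fin m} (hi : i ∈ S) :
    affMap m B ε u i = u i + offset S B ε u i := by
  have diag_part : ∑ j ∈ S, B i j * u j = u i := by
    rw [Finset.sum_eq_single_of_mem i hi]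
    · rw [hB.1.1 i, one_mul]
    · intro j hj hji
      rw [hB.2.2 i j hji (Or.inr hj), zero_mul]
  rw [affMap, offset, ← Finset.sum_add_sum_compl S, diag_part, add_assoc]

lemma act_monFn_eq_one_iff (hB : IsLTsub m S B ε) (u : Point m) :
    act m B ε (monFn m S) u = 1 ↔ ∀ i ∈ S, u i = offset S B ε u i + 1 := by
  rw [act, monFn, ZMod.two_prod_eq_one_iff]
  refine forall₂_congr fun i hi => ?_
  rw [affMap_apply_of_mem hB u hi, CharTwo.add_eq_iff_eq_add, add_comm 1]

/-- Evaluate both images at the point of the graph of the first offset lying over `v`. -/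
lemma offset_eq_of_act_eq (hB : IsLTsub m S B ε) (hB' : IsLTsub m S B' ε')
    (h : act m B ε (monFn m S) = act m B' ε' (monFn m S)) (v : Point m) :
    ∀ i ∈ S, offset S B ε v i = offset S B' ε' v i := by
  let u : Point m := fun k => if k ∈ S then offset S B ε v k + 1 else v k
  have hu : ∀ j ∉ S, u j = v j := fun j hj => if_neg hj
  have on_graph : act m B ε (monFn m S) u = 1 := by
    rw [act_monFn_eq_one_iff hB, offset_congr hu]
    exact fun i hi => if_pos hi
  rw [h, act_monFn_eq_one_iff hB', offset_congr hu] at on_graph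
  intro i hi
  have hui := on_graph i hi
  rw [show u i = offset S B ε v i + 1 from if_pos hi] at hui
  exact add_right_cancel hui

end Offset

theorem stmt2_general (m : ℕ) (S : Finset (Fin m))
    (B B' : Fin m → Fin m → ZMod 2) (ε ε' : Point m)
    (hB : IsLTsub m S B ε) (hB' : IsLTsub m S B' ε')
    (h : act m B ε (monFn m S) = act m B' ε' (monFn m S)) :
    B = B' ∧ ε = ε' := by
  have hoff := offset_eq_of_act_eq hB hB' h
  have hε : ε = ε' := funext fun i => by
    by_cases hi : i ∈ S
    · simpa only [offset_zero] using hoff 0 i hi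
    · rw [hB.2.1 i hi, hB'.2.1 i hi]
  refine ⟨funext fun i => funext fun j => ?_, hε⟩
  by_cases hji : j = i
  · rw [hji, hB.1.1, hB'.1.1]
  by_cases hfree : i ∈ S ∧ j ∉ S
  · have hij := hoff (Pi.single j 1) i hfree.1
    rwa [offset_single hfree.2, offset_single hfree.2, hε, add_left_inj] at hij
  · have hzero : i ∉ S ∨ j ∈ S := by tauto
    rw [hB.2.2 i j hji hzero, hB'.2.2 i j hji hzero]

/-- The action of `LTA(m,2)_f` on the monomial `f` is free. -/
theorem stmt2 (m : ℕ) (hm : 1 ≤ m) (S : Finset (Fin m))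
    (B B' : Fin m → Fin m → ZMod 2) (ε ε' : Point m)
    (hB : IsLTsub m S B ε) (hB' : IsLTsub m S B' ε')
    (h : act m B ε (monFn m S) = act m B' ε' (monFn m S)) :
    B = B' ∧ ε = ε' :=
  stmt2_general m S B B' ε ε' hB hB' h
end

section
/- For every monomial f ∈ M_m, the orbit of f under LTA(m,2) has cardinality |LTA(m,2)·f| = |LTA(m,2)_f·f| = 2^{deg(f)+|λ_f|}. -/
open Finset Pointwise

namespace Stmt3Aux

variable {m : ℕ} (S : Finset (Fin m))

/-- The relevant index pairs: `i ∈ S`, `j < i`, `j ∉ S`. -/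
def Dset (m : ℕ) (S : Finset (Fin m)) : Finset (Fin m × Fin m) :=
  Finset.univ.filter fun q => q.1 ∈ S ∧ q.2 < q.1 ∧ q.2 ∉ S

/-- Matrix built from reduced parameters. -/
def Bof (m : ℕ) (b : Fin m × Fin m → ZMod 2) : Fin m → Fin m → ZMod 2 :=
  fun i j => if i = j then 1 else b (i, j)

def Kb (m : ℕ) (S : Finset (Fin m)) : Finset (Fin m × Fin m → ZMod 2) :=
  Finset.univ.filter fun b => ∀ q, q ∉ Dset m S → b q = 0

def Ke (m : ℕ) (S : Finset (Fin m)) : Finset (Point m) :=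
  Finset.univ.filter fun e => ∀ i, i ∉ S → e i = 0

def Phi (m : ℕ) (S : Finset (Fin m)) (p : (Fin m × Fin m → ZMod 2) × Point m) : Fn m :=
  act m (Bof m p.1) p.2 (monFn m S)

lemma zmod2_cases : ∀ a : ZMod 2, a = 0 ∨ a = 1 := by decide

lemma act_mon (B : Fin m → Fin m → ZMod 2) (ε : Point m) (u : Point m) :
    act m B ε (monFn m S) u = ∏ i ∈ S, ((∑ j, B i j * u j) + ε i) := rfl

lemma zmod2_ne_zero {a : ZMod 2} (h : a ≠ 0) : a = 1 := by revert h; revert a; decide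

lemma prod_eq_one_iff (T : Finset (Fin m)) (c : Fin m → ZMod 2) :
    ∏ i ∈ T, c i = 1 ↔ ∀ i ∈ T, c i = 1 := by
  constructor
  · intro h i hi
    by_contra hne
    have h0 : c i = 0 := (zmod2_cases (c i)).resolve_right hne
    rw [Finset.prod_eq_zero hi h0] at h
    exact one_ne_zero h.symm
  · intro h; exact Finset.prod_eq_one h

lemma rowop_act (B : Fin m → Fin m → ZMod 2) (ε : Point m) {i j : Fin m}
    (hi : i ∈ S) (hj : j ∈ S) (hji : j < i) :
    act m B ε (monFn m S) =
      act m (fun k l => if k = i then B i l + B j l else B k l)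
        (fun k => if k = i then ε i + ε j + 1 else ε k) (monFn m S) := by
  funext u
  rw [act_mon, act_mon]
  set c : Fin m → ZMod 2 := fun k => (∑ l, B k l * u l) + ε k with hc
  set c' : Fin m → ZMod 2 := fun k =>
    (∑ l, (if k = i then B i l + B j l else B k l) * u l) +
      (if k = i then ε i + ε j + 1 else ε k) with hc'
  have hne : j ≠ i := ne_of_lt hji
  have hckk : ∀ k, k ≠ i → c' k = c k := by
    intro k hk; simp only [hc, hc', if_neg hk]
  have hci : c' i = c i + c j + 1 := by
    simp only [hc, hc', eq_self_iff_true, if_true]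
    rw [Finset.sum_congr rfl (fun l _ => add_mul (B i l) (B j l) (u l)),
      Finset.sum_add_distrib]
    ring
  have hjmem : j ∈ S.erase i := Finset.mem_erase.mpr ⟨hne, hj⟩
  rw [← Finset.mul_prod_erase S c hi, ← Finset.mul_prod_erase (S.erase i) c hjmem,
    ← Finset.mul_prod_erase S c' hi, ← Finset.mul_prod_erase (S.erase i) c' hjmem]
  have hrest : ∏ k ∈ (S.erase i).erase j, c k = ∏ k ∈ (S.erase i).erase j, c' k := by
    refine Finset.prod_congr rfl fun k hk => ?_
    have : k ≠ i := Finset.ne_of_mem_erase (Finset.mem_of_mem_erase hk)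
    exact (hckk k this).symm
  rw [← hrest]
  have hkey : ∀ a b : ZMod 2, (a + b + 1) * (b * 1) = a * (b * 1) → True := fun _ _ _ => trivial
  have hkey2 : ∀ a b : ZMod 2, (a + b + 1) * b = a * b := by decide
  rw [hckk j hne, hci, ← mul_assoc, ← mul_assoc, hkey2 (c i) (c j)]

def Bad (m : ℕ) (S : Finset (Fin m)) (B : Fin m → Fin m → ZMod 2) : Finset (Fin m × Fin m) :=
  Finset.univ.filter fun q => q.1 ∈ S ∧ q.2 ∈ S ∧ q.2 < q.1 ∧ B q.1 q.2 ≠ 0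

def mu (m : ℕ) (S : Finset (Fin m)) (B : Fin m → Fin m → ZMod 2) : ℕ :=
  ∑ q ∈ Bad m S B, 2 ^ (q.2 : ℕ)

lemma sum_range_two_pow (n : ℕ) : ∑ k ∈ Finset.range n, 2 ^ k = 2 ^ n - 1 := by
  induction n with
  | zero => simp
  | succ n ih =>
    rw [Finset.sum_range_succ, ih, pow_succ]
    have : 1 ≤ 2 ^ n := Nat.one_le_two_pow
    omega

lemma reduce : ∀ (n : ℕ) (B : Fin m → Fin m → ZMod 2) (ε : Point m), IsLT m B →
    mu m S B ≤ n →
    ∃ b ∈ Kb m S, ∃ e ∈ Ke m S, act m B ε (monFn m S) = Phi m S (b, e) := by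
  intro n
  induction n with
  | zero =>
    intro B ε hLT hmu
    -- Bad must be empty
    have hBad : Bad m S B = ∅ := by
      by_contra hne
      obtain ⟨q, hq⟩ := Finset.nonempty_iff_ne_empty.mpr hne
      have h1 : 2 ^ (q.2 : ℕ) ≤ mu m S B :=
        Finset.single_le_sum (f := fun q : Fin m × Fin m => 2 ^ (q.2 : ℕ))
          (fun _ _ => Nat.zero_le _) hq
      have h2 : 0 < 2 ^ (q.2 : ℕ) := Nat.two_pow_pos _
      omega
    refine ⟨fun q => if q ∈ Dset m S then B q.1 q.2 else 0, ?_,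
      fun i => if i ∈ S then ε i else 0, ?_, ?_⟩
    · simp only [Kb, Finset.mem_filter, Finset.mem_univ, true_and]
      intro q hq; exact if_neg hq
    · simp only [Ke, Finset.mem_filter, Finset.mem_univ, true_and]
      intro i hi; exact if_neg hi
    · funext u
      rw [act_mon, Phi, act_mon]
      dsimp only
      refine Finset.prod_congr rfl fun i hi => ?_
      have hB : ∀ j, B i j = Bof m (fun q => if q ∈ Dset m S then B q.1 q.2 else 0) i j := by
        intro j
        by_cases hij : i = j
        · subst hij; rw [Bof, if_pos rfl, hLT.1]
        · rw [Bof, if_neg hij]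
          by_cases hD : (i, j) ∈ Dset m S
          · rw [if_pos hD]
          · rw [if_neg hD]
            simp only [Dset, Finset.mem_filter, Finset.mem_univ, true_and] at hD
            push_neg at hD
            rcases lt_trichotomy i j with h | h | h
            · exact hLT.2 i j h
            · exact absurd h hij
            · -- j < i, so from hD: j ∈ S, then use Bad empty
              have hjS : j ∈ S := hD hi h
              by_contra hBij
              have : (i, j) ∈ Bad m S B := by
                simp only [Bad, Finset.mem_filter, Finset.mem_univ, true_and]
                exact ⟨hi, hjS, h, hBij⟩
              rw [hBad] at this
              exact absurd this (Finset.notMem_empty _)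
      rw [Finset.sum_congr rfl fun j _ => by rw [hB j], if_pos hi]
  | succ n ih =>
    intro B ε hLT hmu
    by_cases hBad : Bad m S B = ∅
    · -- same as base case : mu = 0
      have : mu m S B ≤ 0 := by rw [mu, hBad]; simp
      -- reuse the zero-case argument by calling reduce at 0? can't; inline via mu ≤ n
      exact ih B ε hLT (le_trans this (Nat.zero_le n))
    · obtain ⟨q, hq⟩ := Finset.nonempty_iff_ne_empty.mpr hBad
      obtain ⟨i, j⟩ := q
      simp only [Bad, Finset.mem_filter, Finset.mem_univ, true_and] at hq
      obtain ⟨hiS, hjS, hji, hBij⟩ := hq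
      set B' : Fin m → Fin m → ZMod 2 := fun k l => if k = i then B i l + B j l else B k l with hB'
      set ε' : Point m := fun k => if k = i then ε i + ε j + 1 else ε k with hε'
      have hLT' : IsLT m B' := by
        constructor
        · intro k
          by_cases hk : k = i
          · subst hk
            simp only [hB', if_pos rfl]
            rw [hLT.1, hLT.2 j k (by exact hji), add_zero]
          · simp only [hB', if_neg hk]; exact hLT.1 k
        · intro k l hkl
          by_cases hk : k = i
          · subst hk
            simp only [hB', if_pos rfl]
            rw [hLT.2 k l hkl, hLT.2 j l (lt_trans hji hkl), add_zero]
          · simp only [hB', if_neg hk]; exact hLT.2 k l hkl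
      -- measure decreases
      have hsub : Bad m S B' ⊆ ((Bad m S B).erase (i, j)) ∪
          (Finset.univ.filter fun q : Fin m × Fin m => q.1 = i ∧ q.2 < j) := by
        intro q hq'
        simp only [Bad, Finset.mem_filter, Finset.mem_univ, true_and] at hq'
        obtain ⟨h1, h2, h3, h4⟩ := hq'
        rw [Finset.mem_union]
        by_cases hq1 : q.1 = i
        · rcases lt_trichotomy q.2 j with h | h | h
          · right
            simp only [Finset.mem_filter, Finset.mem_univ, true_and]
            exact ⟨hq1, h⟩
          · exfalso
            apply h4
            simp only [hB']
            rw [if_pos hq1, h, zmod2_ne_zero hBij, hLT.1]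
            decide
          · left
            rw [Finset.mem_erase]
            constructor
            · intro hcon
              rw [hcon] at h
              exact absurd h (lt_irrefl j)
            · simp only [Bad, Finset.mem_filter, Finset.mem_univ, true_and]
              refine ⟨h1, h2, h3, ?_⟩
              simp only [hB'] at h4
              rw [if_pos hq1, hLT.2 j q.2 h, add_zero] at h4
              rwa [hq1]
        · left
          rw [Finset.mem_erase]
          constructor
          · intro hcon
            apply hq1
            rw [hcon]
          · simp only [Bad, Finset.mem_filter, Finset.mem_univ, true_and]
            refine ⟨h1, h2, h3, ?_⟩
            simp only [hB'] at h4
            rwa [if_neg hq1] at h4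
      have hmu' : mu m S B' < mu m S B := by
        have hle : mu m S B' ≤ ∑ q ∈ ((Bad m S B).erase (i, j)), 2 ^ (q.2 : ℕ) +
            ∑ q ∈ (Finset.univ.filter fun q : Fin m × Fin m => q.1 = i ∧ q.2 < j),
              2 ^ (q.2 : ℕ) := by
          calc mu m S B' ≤ ∑ q ∈ (((Bad m S B).erase (i, j)) ∪
              (Finset.univ.filter fun q : Fin m × Fin m => q.1 = i ∧ q.2 < j)), 2 ^ (q.2 : ℕ) :=
            Finset.sum_le_sum_of_subset hsub
          _ ≤ _ := by
            have := Finset.sum_union_inter (s₁ := (Bad m S B).erase (i, j))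
              (s₂ := Finset.univ.filter fun q : Fin m × Fin m => q.1 = i ∧ q.2 < j)
              (f := fun q : Fin m × Fin m => 2 ^ (q.2 : ℕ))
            omega
        have hmem : (i, j) ∈ Bad m S B := by
          simp only [Bad, Finset.mem_filter, Finset.mem_univ, true_and]
          exact ⟨hiS, hjS, hji, hBij⟩
        have herase : 2 ^ (j : ℕ) + ∑ q ∈ ((Bad m S B).erase (i, j)), 2 ^ (q.2 : ℕ) =
            mu m S B :=
          Finset.add_sum_erase (Bad m S B) (fun q : Fin m × Fin m => 2 ^ (q.2 : ℕ)) hmem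
        have hfilt : ∑ q ∈ (Finset.univ.filter fun q : Fin m × Fin m => q.1 = i ∧ q.2 < j),
            2 ^ (q.2 : ℕ) < 2 ^ (j : ℕ) := by
          have heq : ∑ q ∈ (Finset.univ.filter fun q : Fin m × Fin m => q.1 = i ∧ q.2 < j),
              2 ^ (q.2 : ℕ) = ∑ k ∈ Finset.range (j : ℕ), 2 ^ k := by
            refine Finset.sum_bij (fun q _ => ((q.2 : ℕ))) ?_ ?_ ?_ ?_
            · intro q hq
              simp only [Finset.mem_filter, Finset.mem_univ, true_and] at hq
              exact Finset.mem_range.mpr hq.2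
            · intro q hq q' hq' hqq
              simp only [Finset.mem_filter, Finset.mem_univ, true_and] at hq hq'
              have h2 : q.2 = q'.2 := Fin.ext hqq
              exact Prod.ext (hq.1.trans hq'.1.symm) h2
            · intro k hk
              rw [Finset.mem_range] at hk
              have hkm : k < m := lt_trans hk j.isLt
              refine ⟨(i, ⟨k, hkm⟩), ?_, rfl⟩
              simp only [Finset.mem_filter, Finset.mem_univ, true_and]
              simpa [Fin.lt_def] using hk
            · intro q hq
              rfl
          rw [heq, sum_range_two_pow]
          have : 0 < 2 ^ (j : ℕ) := Nat.two_pow_pos _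
          omega
        omega
      have := ih B' ε' hLT' (by omega)
      rwa [← rowop_act S B ε hiS hjS hji] at this

lemma phi_inj {b b' : Fin m × Fin m → ZMod 2} {e e' : Point m}
    (hb : b ∈ Kb m S) (he : e ∈ Ke m S) (hb' : b' ∈ Kb m S) (he' : e' ∈ Ke m S)
    (h : Phi m S (b, e) = Phi m S (b', e')) : b = b' ∧ e = e' := by
  simp only [Kb, Ke, Finset.mem_filter, Finset.mem_univ, true_and] at hb he hb' he'
  have main : ∀ v : Point m, ∀ i ∈ S,
      e i + ∑ l, b (i, l) * v l = e' i + ∑ l, b' (i, l) * v l := by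
    intro v
    set u : Point m := fun k => if k ∈ S then 1 + e k + ∑ l, b (k, l) * v l else v k with hu
    have hsum : ∀ (c : Fin m × Fin m → ZMod 2), (∀ q, q ∉ Dset m S → c q = 0) →
        ∀ k, ∑ l, c (k, l) * u l = ∑ l, c (k, l) * v l := by
      intro c hc k
      refine Finset.sum_congr rfl fun l _ => ?_
      by_cases h0 : c (k, l) = 0
      · rw [h0, zero_mul, zero_mul]
      · have hlS : l ∉ S := by
          by_contra hl
          exact h0 (hc _ (by simp [Dset, hl]))
        rw [hu]
        dsimp only
        rw [if_neg hlS]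
    have hBsum : ∀ (c : Fin m × Fin m → ZMod 2), (∀ q, q ∉ Dset m S → c q = 0) → ∀ k,
        ∑ l, Bof m c k l * u l = u k + ∑ l, c (k, l) * u l := by
      intro c hc k
      have hterm : ∀ l : Fin m,
          Bof m c k l * u l = (if k = l then u l else 0) + c (k, l) * u l := by
        intro l
        by_cases hkl : k = l
        · subst hkl
          rw [Bof, if_pos rfl, if_pos rfl, one_mul, hc (k, k) (by simp [Dset]), zero_mul,
            add_zero]
        · rw [Bof, if_neg hkl, if_neg hkl, zero_add]
      rw [Finset.sum_congr rfl fun l _ => hterm l, Finset.sum_add_distrib,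
        Finset.sum_ite_eq Finset.univ k u, if_pos (Finset.mem_univ k)]
    have hone : Phi m S (b, e) u = 1 := by
      rw [Phi, act_mon]
      dsimp only
      refine Finset.prod_eq_one fun i hi => ?_
      rw [hBsum b hb i, hsum b hb i]
      have hui : u i = 1 + e i + ∑ l, b (i, l) * v l := by
        rw [hu]; dsimp only; rw [if_pos hi]
      rw [hui]
      generalize e i = p
      generalize (∑ l, b (i, l) * v l) = s
      revert p s
      decide
    intro i hi
    have hone' : Phi m S (b', e') u = 1 := by rw [← h]; exact hone
    rw [Phi, act_mon] at hone'
    have hfac := (prod_eq_one_iff S _).mp hone' i hi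
    dsimp only at hfac
    rw [hBsum b' hb' i, hsum b' hb' i] at hfac
    have hui : u i = 1 + e i + ∑ l, b (i, l) * v l := by
      rw [hu]; dsimp only; rw [if_pos hi]
    rw [hui] at hfac
    revert hfac
    generalize e i = p
    generalize e' i = p'
    generalize (∑ l, b (i, l) * v l) = s
    generalize (∑ l, b' (i, l) * v l) = s'
    revert p p' s s'
    decide
  have he2 : e = e' := by
    funext i
    by_cases hi : i ∈ S
    · have := main (fun _ => 0) i hi
      simpa using this
    · rw [he i hi, he' i hi]
  refine ⟨?_, he2⟩
  funext q
  obtain ⟨i, k⟩ := q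
  by_cases hi : i ∈ S
  · have hmv := main (fun l => if l = k then 1 else 0) i hi
    have hs : ∀ (c : Fin m × Fin m → ZMod 2),
        ∑ l, c (i, l) * (if l = k then (1 : ZMod 2) else 0) = c (i, k) := by
      intro c
      simp only [mul_ite, mul_one, mul_zero]
      rw [Finset.sum_ite_eq' Finset.univ k (fun l => c (i, l)), if_pos (Finset.mem_univ k)]
    rw [hs b, hs b', he2] at hmv
    exact add_left_cancel hmv
  · rw [hb (i, k) (by simp [Dset, hi]), hb' (i, k) (by simp [Dset, hi])]

lemma card_supported {α : Type*} [Fintype α] [DecidableEq α] (s : Finset α) :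
    (Finset.univ.filter fun f : α → ZMod 2 => ∀ a, a ∉ s → f a = 0).card = 2 ^ s.card := by
  classical
  rw [← Fintype.card_subtype]
  have E : {f : α → ZMod 2 // ∀ a, a ∉ s → f a = 0} ≃ ((a : s) → ZMod 2) :=
    { toFun := fun f a => f.1 a
      invFun := fun g => ⟨fun a => if h : a ∈ s then g ⟨a, h⟩ else 0, fun a ha => dif_neg ha⟩
      left_inv := by
        intro f
        apply Subtype.ext
        funext a
        dsimp only
        by_cases h : a ∈ s
        · exact dif_pos h
        · rw [dif_neg h, f.2 a h]
      right_inv := by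
        intro g
        funext a
        dsimp only
        exact dif_pos a.2 }
  rw [Fintype.card_congr E, Fintype.card_fun, ZMod.card, Fintype.card_coe]

lemma card_Dset : (Dset m S).card = lamSum m S S := by
  rw [lamSum]
  rw [Finset.card_eq_sum_card_fiberwise (f := Prod.fst) (t := S)
    (fun q hq => by simp only [Dset, Finset.mem_coe, Finset.mem_filter, Finset.mem_univ, true_and] at hq
                    exact hq.1)]
  refine Finset.sum_congr rfl fun i hi => ?_
  rw [lam]
  refine Finset.card_bij (fun q _ => q.2) ?_ ?_ ?_
  · intro q hq
    simp only [Dset, Finset.mem_filter, Finset.mem_univ, true_and] at hq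
    obtain ⟨⟨h1, h2, h3⟩, h4⟩ := hq
    simp only [Finset.mem_filter, Finset.mem_univ, true_and]
    rw [h4] at h2
    exact ⟨h2, h3⟩
  · intro q hq q' hq' hqq
    simp only [Dset, Finset.mem_filter, Finset.mem_univ, true_and] at hq hq'
    exact Prod.ext (hq.2.trans hq'.2.symm) hqq
  · intro j hj
    simp only [Finset.mem_filter, Finset.mem_univ, true_and] at hj
    refine ⟨(i, j), ?_, rfl⟩
    simp [Dset, hi, hj.1, hj.2]

end Stmt3Aux


open Stmt3Aux in
/-- `|LTA(m,2)·f| = |LTA(m,2)_f·f| = 2^(deg f + |λ_f|)`. -/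
theorem stmt3 (m : ℕ) (hm : 1 ≤ m) (S : Finset (Fin m)) :
    (orbit m (monFn m S)).ncard = 2 ^ (S.card + lamSum m S S) ∧
    (orbitSub m S (monFn m S)).ncard = 2 ^ (S.card + lamSum m S S) := by
  classical
  set K : Finset ((Fin m × Fin m → ZMod 2) × Point m) := (Kb m S) ×ˢ (Ke m S) with hK
  have hsub1 : orbit m (monFn m S) ⊆ Phi m S '' ↑K := by
    rintro Q ⟨B, ε, hLT, rfl⟩
    obtain ⟨b, hb, e, he, heq⟩ := reduce S (mu m S B) B ε hLT le_rfl
    exact ⟨(b, e), Finset.mem_coe.mpr (Finset.mem_product.mpr ⟨hb, he⟩), heq.symm⟩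
  have hsub2 : Phi m S '' ↑K ⊆ orbitSub m S (monFn m S) := by
    rintro Q ⟨⟨b, e⟩, hbe, rfl⟩
    rw [Finset.mem_coe, Finset.mem_product] at hbe
    obtain ⟨hb, he⟩ := hbe
    simp only [Kb, Ke, Finset.mem_filter, Finset.mem_univ, true_and] at hb he
    refine ⟨Bof m b, e, ⟨⟨?_, ?_⟩, ?_, ?_⟩, rfl⟩
    · intro i; rw [Bof, if_pos rfl]
    · intro i j hij
      rw [Bof, if_neg (ne_of_lt hij)]
      refine hb (i, j) ?_
      simp only [Dset, Finset.mem_filter, Finset.mem_univ, true_and]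
      rintro ⟨-, hji, -⟩
      exact absurd hij (not_lt_of_gt hji)
    · exact he
    · intro i j hji hcond
      rw [Bof, if_neg (Ne.symm hji)]
      refine hb (i, j) ?_
      simp only [Dset, Finset.mem_filter, Finset.mem_univ, true_and]
      rintro ⟨hiS, hjlt, hjS⟩
      rcases hcond with h | h
      · exact h hiS
      · exact hjS h
  have hsub3 : orbitSub m S (monFn m S) ⊆ orbit m (monFn m S) := by
    rintro Q ⟨B, ε, hS, rfl⟩
    exact ⟨B, ε, hS.1, rfl⟩
  have heq1 : orbit m (monFn m S) = Phi m S '' ↑K :=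
    Set.Subset.antisymm hsub1 (hsub2.trans hsub3)
  have heq2 : orbitSub m S (monFn m S) = Phi m S '' ↑K :=
    Set.Subset.antisymm (hsub3.trans hsub1) hsub2
  have hinj : Set.InjOn (Phi m S) ↑K := by
    rintro ⟨b, e⟩ hbe ⟨b', e'⟩ hbe' hphi
    rw [Finset.mem_coe, Finset.mem_product] at hbe hbe'
    obtain ⟨h1, h2⟩ := phi_inj S hbe.1 hbe.2 hbe'.1 hbe'.2 hphi
    exact Prod.ext h1 h2
  have hcard : (Phi m S '' ↑K).ncard = K.card := by
    rw [Set.ncard_image_of_injOn hinj, Set.ncard_coe_finset]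
  have hKb : (Kb m S).card = 2 ^ (Dset m S).card := by
    unfold Kb; rw [Finset.filter_congr_decidable]; rw [← card_supported (Dset m S)]
  have hKe : (Ke m S).card = 2 ^ S.card := by
    unfold Ke
    convert card_supported S using 2
    ext f
    simp
  have hKcard : K.card = 2 ^ (S.card + lamSum m S S) := by
    rw [hK, Finset.card_product, hKb, hKe, card_Dset, ← pow_add, Nat.add_comm]
  constructor
  · rw [heq1, hcard, hKcard]
  · rw [heq2, hcard, hKcard]
end

section
/- Let P = ∏_{j=1}^{l} y_j ∈ R_m be a product of l linearly independent affine forms. Then there exist l linearly independent affine forms y_1*,…,y_l* whose maximum variables are pairwise distinct such that P = ∏_{j=1}^{l} y_j*. -/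
open Finset Pointwise

/-!
Over `F_2` a product of affine forms `∏ (c_j + a_j ⬝ u)` is the indicator function of the
affine subspace `{u | a_j ⬝ u = c_j + 1 for all j} = u₀ + (span a)^⊥`, so it depends only on
`span a` and one point `u₀` of that subspace (which exists since the `a_j` are independent).
Replacing the `a_j` by a basis of `span a` in echelon form, whose pivots are the maximum
variables and hence pairwise distinct, and adjusting the constants so that `u₀` stays a
solution, leaves the product unchanged.
-/

open Submodule Set Function

section Echelon

variable {K ι : Type*} [Field K]

def IsMaxVar [LinearOrder ι] (v : ι → K) (t : ι) : Prop :=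
  v t ≠ 0 ∧ ∀ i, t < i → v i = 0

lemma exists_pivot [Fintype ι] [LinearOrder ι] {W : Submodule K (ι → K)} (hW : W ≠ ⊥) :
    ∃ p, ∃ w ∈ W, w p ≠ 0 ∧ ∀ v ∈ W, ∀ i, p < i → v i = 0 := by
  classical
  set S := univ.filter fun i => ∃ v ∈ W, v i ≠ 0
  obtain ⟨v, hv, hv0⟩ := exists_mem_ne_zero_of_ne_bot hW
  obtain ⟨i, hi⟩ := Function.ne_iff.mp hv0
  have hS : S.Nonempty := ⟨i, mem_filter.mpr ⟨mem_univ i, v, hv, hi⟩⟩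
  obtain ⟨w, hw, hwp⟩ := (mem_filter.mp (S.max'_mem hS)).2
  refine ⟨S.max' hS, w, hw, hwp, fun v hv i hpi => ?_⟩
  by_contra hvi
  exact (S.le_max' i (mem_filter.mpr ⟨mem_univ i, v, hv, hvi⟩)).not_gt hpi

lemma span_singleton_sup_inf_ker_proj {W : Submodule K (ι → K)} {w : ι → K} {p : ι}
    (hw : w ∈ W) (hwp : w p ≠ 0) :
    K ∙ w ⊔ (W ⊓ LinearMap.ker (LinearMap.proj p)) = W := by
  refine le_antisymm (sup_le ((span_singleton_le_iff_mem w W).mpr hw) inf_le_left)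
    fun v hv => mem_sup.mpr
      ⟨(v p / w p) • w, mem_span_singleton.mpr ⟨_, rfl⟩, _, ?_, add_sub_cancel _ v⟩
  refine ⟨W.sub_mem hv (W.smul_mem _ hw), ?_⟩
  simp [div_mul_cancel₀ _ hwp]

theorem exists_echelon_basis [Fintype ι] [LinearOrder ι] (W : Submodule K (ι → K)) :
    ∃ (n : ℕ) (b : Fin n → ι → K) (t : Fin n → ι), LinearIndependent K b ∧
      span K (range b) = W ∧ Injective t ∧ ∀ j, IsMaxVar (b j) (t j) := by
  induction hd : Module.finrank K W using Nat.strong_induction_on generalizing W with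
  | _ d ih =>
  rcases eq_or_ne W ⊥ with rfl | hW
  · exact ⟨0, Fin.elim0, Fin.elim0, linearIndependent_empty_type, by simp, fun j => j.elim0,
      fun j => j.elim0⟩
  obtain ⟨p, w, hw, hwp, hmax⟩ := exists_pivot hW
  -- `w` becomes the first basis vector; the rest is an echelon basis of `W ∩ {v | v p = 0}`.
  set U := W ⊓ LinearMap.ker (LinearMap.proj p : (ι → K) →ₗ[K] K)
  have hwU : w ∉ U := fun h => hwp h.2
  have hUW : U < W := lt_of_le_of_ne inf_le_left fun h => hwU (h ▸ hw)
  obtain ⟨n, b, t, hb, hspan, ht, hpiv⟩ := ih _ (hd ▸ finrank_lt_finrank_of_lt hUW) U rfl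
  have hbU : ∀ j, b j ∈ U := fun j => hspan ▸ subset_span (mem_range_self j)
  have htp : ∀ j, t j < p := fun j =>
    lt_of_le_of_ne (not_lt.mp fun h => (hpiv j).1 (hmax _ (hbU j).1 _ h))
      fun h => (hpiv j).1 (h ▸ (hbU j).2)
  refine ⟨n + 1, Fin.cons w b, Fin.cons p t, ?_, ?_, ?_, ?_⟩
  · exact linearIndependent_finCons.mpr ⟨hb, hspan ▸ hwU⟩
  · rw [Fin.range_cons, span_insert, hspan, span_singleton_sup_inf_ker_proj hw hwp]
  · exact Fin.cons_injective_iff.mpr ⟨fun ⟨j, hj⟩ => (htp j).ne hj, ht⟩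
  · exact Fin.cases ⟨hwp, hmax w hw⟩ (fun j => by simpa using hpiv j)

end Echelon

lemma Matrix.mulVec_surjective_of_linearIndependent_row {K m n : Type*} [Field K] [Fintype m]
    [Fintype n] {A : Matrix m n K} (h : LinearIndependent K A.row) : Surjective A.mulVec := by
  have htop : LinearMap.range A.mulVecLin = ⊤ := by
    apply eq_top_of_finrank_eq
    rw [show Module.finrank K (LinearMap.range A.mulVecLin) = A.rank from rfl, h.rank_matrix]
    simp
  exact LinearMap.range_eq_top.mp htop

lemma forall_mem_span_dotProduct_eq_zero_iff {R ι κ : Type*} [CommSemiring R] [Fintype ι]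
    (a : κ → ι → R) (v : ι → R) :
    (∀ w ∈ span R (range a), w ⬝ᵥ v = 0) ↔ ∀ j, a j ⬝ᵥ v = 0 := by
  refine ⟨fun h j => h _ (subset_span (mem_range_self j)), fun h w hw => ?_⟩
  induction hw using span_induction with
  | mem x hx => obtain ⟨j, rfl⟩ := hx; exact h j
  | zero => exact zero_dotProduct v
  | add x y _ _ hx hy => rw [add_dotProduct, hx, hy, add_zero]
  | smul r x _ hx => rw [smul_dotProduct, hx, smul_zero]

lemma ZMod.two_eq_of_eq_one_iff {x y : ZMod 2} (h : x = 1 ↔ y = 1) : x = y := by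
  revert x y; decide

lemma ZMod.two_prod_eq_one_iff_s5 {κ : Type*} [Fintype κ] (v : κ → ZMod 2) :
    ∏ j, v j = 1 ↔ ∀ j, v j = 1 := by
  refine ⟨fun h j => ?_, fun h => prod_eq_one fun j _ => h j⟩
  by_contra hj
  have hv : v j = 0 := by revert hj; generalize v j = x; revert x; decide
  exact zero_ne_one ((prod_eq_zero (mem_univ j) hv).symm.trans h)

lemma affForm_eq_one_iff {m : ℕ} {c : ZMod 2} {a u₀ : Point m} (h : a ⬝ᵥ u₀ = c + 1)
    (u : Point m) : affForm m c a u = 1 ↔ a ⬝ᵥ (u - u₀) = 0 := by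
  rw [dotProduct_sub, h, sub_eq_zero]
  change c + a ⬝ᵥ u = 1 ↔ _
  generalize a ⬝ᵥ u = s
  clear h
  revert c s
  decide

lemma prod_affForm_apply_eq_one_iff {m : ℕ} {κ : Type*} [Fintype κ] {c : κ → ZMod 2}
    {a : κ → Point m} {u₀ : Point m} (hu₀ : ∀ j, a j ⬝ᵥ u₀ = c j + 1) (u : Point m) :
    (∏ j, affForm m (c j) (a j)) u = 1 ↔
      ∀ w ∈ span (ZMod 2) (range a), w ⬝ᵥ (u - u₀) = 0 := by
  rw [Finset.prod_apply, ZMod.two_prod_eq_one_iff_s5, forall_mem_span_dotProduct_eq_zero_iff]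
  simp only [affForm_eq_one_iff (hu₀ _)]

lemma prod_affForm_eq_of_span_eq {m : ℕ} {κ κ' : Type*} [Fintype κ] [Fintype κ']
    {c : κ → ZMod 2} {a : κ → Point m} {c' : κ' → ZMod 2} {a' : κ' → Point m}
    {u₀ : Point m}
    (hu₀ : ∀ j, a j ⬝ᵥ u₀ = c j + 1) (hu₀' : ∀ j, a' j ⬝ᵥ u₀ = c' j + 1)
    (hspan : span (ZMod 2) (range a) = span (ZMod 2) (range a')) :
    ∏ j, affForm m (c j) (a j) = ∏ j, affForm m (c' j) (a' j) := by
  funext u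
  apply ZMod.two_eq_of_eq_one_iff
  rw [prod_affForm_apply_eq_one_iff hu₀, prod_affForm_apply_eq_one_iff hu₀', hspan]

theorem stmt5_general (m : ℕ) (l : ℕ) (c : Fin l → ZMod 2) (a : Fin l → Point m)
    (hli : LinearIndependent (ZMod 2) a) (P : Fn m)
    (hP : P = ∏ j, affForm m (c j) (a j)) :
    ∃ (c' : Fin l → ZMod 2) (a' : Fin l → Point m) (t : Fin l → Fin m),
      LinearIndependent (ZMod 2) a' ∧
      (∀ j, a' j (t j) ≠ 0 ∧ ∀ i : Fin m, t j < i → a' j i = 0) ∧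
      Function.Injective t ∧
      P = ∏ j, affForm m (c' j) (a' j) := by
  obtain ⟨n, b, t, hb, hspan, ht, hpiv⟩ := exists_echelon_basis (span (ZMod 2) (range a))
  obtain rfl : n = l := by
    have hcard := finrank_span_eq_card hb
    rw [hspan, finrank_span_eq_card hli] at hcard
    simpa using hcard.symm
  obtain ⟨u₀, hu₀⟩ :=
    Matrix.mulVec_surjective_of_linearIndependent_row (A := Matrix.of a) hli fun j => c j + 1
  refine ⟨fun j => b j ⬝ᵥ u₀ - 1, b, t, hb, hpiv, ht, ?_⟩
  exact hP.trans (prod_affForm_eq_of_span_eq (congrFun hu₀) (fun j => (sub_add_cancel _ _).symm)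
    hspan.symm)

/-- a product of `l` linearly independent affine forms can be rewritten as a
product of `l` linearly independent affine forms whose maximum variables are pairwise
distinct. -/
theorem stmt5 (m : ℕ) (hm : 1 ≤ m) (l : ℕ) (c : Fin l → ZMod 2) (a : Fin l → Point m)
    (hli : LinearIndependent (ZMod 2) a) (P : Fn m)
    (hP : P = ∏ j, affForm m (c j) (a j)) :
    ∃ (c' : Fin l → ZMod 2) (a' : Fin l → Point m) (t : Fin l → Fin m),
      LinearIndependent (ZMod 2) a' ∧
      (∀ j, a' j (t j) ≠ 0 ∧ ∀ i : Fin m, t j < i → a' j i = 0) ∧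
      Function.Injective t ∧
      P = ∏ j, affForm m (c' j) (a' j) :=
  stmt5_general m l c a hli P hP
end

section
/- Let I ⊆ M_m be a decreasing monomial set with r = max_{f∈I} deg(f), let f,g ∈ I_r and h = gcd(f,g). Then LTA(m,2)·h · (LTA(m,2)·(f/h) + LTA(m,2)·(g/h)) = LTA(m,2)_h·h · (LTA(m,2)_f·(f/h) + LTA(m,2)_g·(g/h)). -/
open Finset Pointwise

/-!
Write an element of `LTA(m,2)·x_S` as `∏_{i ∈ S} ℓ_i` with `ℓ_i = x_i + (terms in x_j, j < i)`.
Over `F_2` the product `∏_{k ∈ K} ℓ_k` is the indicator of the affine set `{ℓ_k = 1, k ∈ K}`,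
so in a product with it any factor may be replaced by a form agreeing with it on that set.
Hence adding `ℓ_k + 1` to `ℓ_i` for pivots `k < i`, from the top index down, removes from `ℓ_i`
every variable `x_k` of `h` (resp. of `f`) without changing `∏_{i ∈ h} ℓ_i` (resp. its product
with `∏_{i ∈ f/h} ℓ'_i`), which is exactly what membership in `LTA(m,2)_h` (resp. `LTA(m,2)_f`)
asks of the rows.
-/

lemma ZMod.two_eq_zero_of_ne_one {a : ZMod 2} (ha : a ≠ 1) : a = 0 := by
  revert a; decide

lemma Finset.prod_zmod_two_eq_zero {ι : Type*} {s : Finset ι} {x : ι → ZMod 2}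
    (h : ¬ ∀ k ∈ s, x k = 1) : ∏ k ∈ s, x k = 0 := by
  push Not at h
  obtain ⟨k, hk, hne⟩ := h
  exact prod_eq_zero hk (ZMod.two_eq_zero_of_ne_one hne)

lemma Finset.prod_zmod_two_congr_of_lower {ι : Type*} [LinearOrder ι] (s : Finset ι)
    {x y : ι → ZMod 2} (h : ∀ i ∈ s, (∀ k ∈ s, k < i → x k = 1) → y i = x i) :
    ∏ i ∈ s, y i = ∏ i ∈ s, x i := by
  induction s using Finset.induction_on_max with
  | empty => rfl
  | insert a s hlt ih =>
    have ha : a ∉ s := fun ha => lt_irrefl a (hlt a ha)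
    rw [prod_insert ha, prod_insert ha,
      ih fun i hi hlow => h i (mem_insert_of_mem hi) fun k hk hki =>
        hlow k ((mem_insert.1 hk).resolve_left (by rintro rfl; exact lt_asymm hki (hlt i hi))) hki]
    by_cases hs : ∀ k ∈ s, x k = 1
    · rw [h a (mem_insert_self a s) fun k hk hka =>
        hs k ((mem_insert.1 hk).resolve_left hka.ne)]
    · rw [prod_zmod_two_eq_zero hs, mul_zero, mul_zero]

section

variable {m : ℕ}

lemma IsLT.piecewise {B B₀ : Fin m → Point m} (hB : IsLT m B) (hB₀ : IsLT m B₀)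
    (S : Finset (Fin m)) : IsLT m (S.piecewise B B₀) := by
  constructor
  · intro i
    by_cases hi : i ∈ S <;> simp [hi, hB.1 i, hB₀.1 i]
  · intro i j hij
    by_cases hi : i ∈ S <;> simp [hi, hB.2 i j hij, hB₀.2 i j hij]

lemma affForm_add_mul (d c e : ZMod 2) (b a : Point m) (u : Point m) :
    affForm m (d + e * (c + 1)) (b + e • a) u = affForm m d b u + e * (affForm m c a u + 1) := by
  simp only [affForm, Pi.add_apply, Pi.smul_apply, smul_eq_mul, add_mul, sum_add_distrib,
    mul_assoc]
  rw [← mul_sum]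
  ring

lemma exists_affForm_reduce (K : Finset (Fin m)) (c : Point m) {B : Fin m → Point m}
    (hB : IsLT m B) (d : ZMod 2) (b : Point m) :
    ∃ d' b', (∀ j ∈ K, b' j = 0) ∧ (∀ j, (∀ k ∈ K, k < j) → b' j = b j) ∧
      ∀ u, (∀ k ∈ K, affForm m (c k) (B k) u = 1) → affForm m d' b' u = affForm m d b u := by
  induction K using Finset.induction_on_max generalizing d b with
  | empty => exact ⟨d, b, by simp, fun _ _ => rfl, fun _ _ => rfl⟩
  | insert k K hlt ih =>
    -- Adding `b k • (ℓ_k + 1)` kills `x_k`, changes only columns `≤ k`, and is `0` where `ℓ_k = 1`.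
    obtain ⟨d', b', hzero, hkeep, hagree⟩ := ih (d + b k * (c k + 1)) (b + b k • B k)
    refine ⟨d', b', fun j hj => ?_, fun j hj => ?_, fun u hu => ?_⟩
    · rcases mem_insert.1 hj with rfl | hj
      · rw [hkeep j hlt]
        simp [hB.1 j, CharTwo.add_self_eq_zero]
      · exact hzero j hj
    · rw [hkeep j fun k' hk' => hj k' (mem_insert_of_mem hk')]
      simp [hB.2 k j (hj k (mem_insert_self k K))]
    · rw [hagree u fun k' hk' => hu k' (mem_insert_of_mem hk'), affForm_add_mul,
        hu k (mem_insert_self k K), CharTwo.add_self_eq_zero, mul_zero, add_zero]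

/-- Row `i` is reduced modulo the pivots of `T` below `i`, whose forms are taken from `(c, B)` on
`S` and from `(c₀, B₀)` on `T \ S`. -/
lemma exists_rows_reduced (S T : Finset (Fin m)) {B B₀ : Fin m → Point m} (hB : IsLT m B)
    (hB₀ : IsLT m B₀) (c c₀ : Point m) :
    ∃ (c' : Point m) (B' : Fin m → Point m), IsLT m B' ∧ (∀ i ∈ S, ∀ j ∈ T, j ≠ i → B' i j = 0) ∧
      ∀ u, (∀ k ∈ T, k ∉ S → affForm m (c₀ k) (B₀ k) u = 1) →
        ∏ i ∈ S, affForm m (c' i) (B' i) u = ∏ i ∈ S, affForm m (c i) (B i) u := by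
  choose c' B' hzero hkeep hagree using fun i =>
    exists_affForm_reduce (T.filter (· < i)) (S.piecewise c c₀) (hB.piecewise hB₀ S) (c i) (B i)
  have hupper : ∀ i j, i ≤ j → B' i j = B i j := fun i j hij =>
    hkeep i j fun k hk => (mem_filter.1 hk).2.trans_le hij
  refine ⟨c', B', ⟨fun i => (hupper i i le_rfl).trans (hB.1 i),
    fun i j hij => (hupper i j hij.le).trans (hB.2 i j hij)⟩, fun i _ j hj hji => ?_,
    fun u hu => prod_zmod_two_congr_of_lower S fun i hi hlow => hagree i u fun k hk => ?_⟩
  · rcases lt_or_gt_of_ne hji with hlt | hgt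
    · exact hzero i j (mem_filter.2 ⟨hj, hlt⟩)
    · rw [hupper i j hgt.le, hB.2 i j hgt]
  · obtain ⟨hkT, hki⟩ := mem_filter.1 hk
    by_cases hkS : k ∈ S
    · simpa [hkS] using hlow k hkS hki
    · simpa [hkS] using hu k hkT hkS

lemma act_monFn (B : Fin m → Point m) (ε : Point m) (S : Finset (Fin m)) :
    act m B ε (monFn m S) = fun u => ∏ i ∈ S, affForm m (ε i) (B i) u := by
  funext u
  simp only [act, monFn, affMap, affForm, add_comm]

lemma act_monFn_mem_orbitSub {S T : Finset (Fin m)} (hST : S ⊆ T) {B : Fin m → Point m}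
    (hB : IsLT m B) (hrow : ∀ i ∈ S, ∀ j ∈ T, j ≠ i → B i j = 0) (ε : Point m) :
    act m B ε (monFn m S) ∈ orbitSub m T (monFn m S) := by
  refine ⟨S.piecewise B fun i j => if j = i then 1 else 0, S.piecewise ε 0,
    ⟨hB.piecewise ⟨fun i => if_pos rfl, fun i j hij => if_neg hij.ne'⟩ S, fun i hi => ?_,
      fun i j hji hij => ?_⟩, ?_⟩
  · exact piecewise_eq_of_notMem _ _ _ fun h => hi (hST h)
  · by_cases hi : i ∈ S
    · simpa [hi] using hrow i hi j (hij.resolve_left (not_not.2 (hST hi))) hji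
    · simp [hi, hji]
  · simp only [act_monFn]
    funext u
    exact prod_congr rfl fun i hi => by simp [hi]

lemma orbitSub_subset_orbit (S : Finset (Fin m)) (P : Fn m) : orbitSub m S P ⊆ orbit m P := by
  rintro Q ⟨B, ε, ⟨hB, -, -⟩, rfl⟩
  exact ⟨B, ε, hB, rfl⟩

end

theorem stmt9_general (m : ℕ) (f g : Finset (Fin m)) :
    orbit m (monFn m (f ∩ g)) *
        (orbit m (monFn m (f \ (f ∩ g))) + orbit m (monFn m (g \ (f ∩ g)))) =
      orbitSub m (f ∩ g) (monFn m (f ∩ g)) *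
        (orbitSub m f (monFn m (f \ (f ∩ g))) +
          orbitSub m g (monFn m (g \ (f ∩ g)))) := by
  refine Set.Subset.antisymm ?_ (Set.mul_subset_mul (orbitSub_subset_orbit _ _)
    (Set.add_subset_add (orbitSub_subset_orbit _ _) (orbitSub_subset_orbit _ _)))
  rintro _ ⟨_, ⟨B₁, ε₁, hB₁, rfl⟩, _, ⟨_, ⟨B₂, ε₂, hB₂, rfl⟩, _, ⟨B₃, ε₃, hB₃, rfl⟩, rfl⟩, rfl⟩
  dsimp only
  obtain ⟨c₁, C₁, hC₁, hrow₁, heq₁⟩ := exists_rows_reduced (f ∩ g) (f ∩ g) hB₁ hB₁ ε₁ ε₁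
  obtain ⟨c₂, C₂, hC₂, hrow₂, heq₂⟩ := exists_rows_reduced (f \ (f ∩ g)) f hB₂ hB₁ ε₂ ε₁
  obtain ⟨c₃, C₃, hC₃, hrow₃, heq₃⟩ := exists_rows_reduced (g \ (f ∩ g)) g hB₃ hB₁ ε₃ ε₁
  have hreduce : act m B₁ ε₁ (monFn m (f ∩ g)) *
      (act m B₂ ε₂ (monFn m (f \ (f ∩ g))) + act m B₃ ε₃ (monFn m (g \ (f ∩ g)))) =
      act m C₁ c₁ (monFn m (f ∩ g)) *
      (act m C₂ c₂ (monFn m (f \ (f ∩ g))) + act m C₃ c₃ (monFn m (g \ (f ∩ g)))) := by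
    simp only [act_monFn]
    funext u
    simp only [Pi.mul_apply, Pi.add_apply]
    rw [heq₁ u fun k hk hk' => absurd hk hk']
    by_cases hu : ∀ k ∈ f ∩ g, affForm m (ε₁ k) (B₁ k) u = 1
    · have hpivot (e : Finset (Fin m)) : ∀ k ∈ e, k ∉ e \ (f ∩ g) →
          affForm m (ε₁ k) (B₁ k) u = 1 := fun k hk hk' =>
        hu k (not_not.1 fun h => hk' (mem_sdiff.2 ⟨hk, h⟩))
      rw [heq₂ u (hpivot f), heq₃ u (hpivot g)]
    · rw [prod_zmod_two_eq_zero hu, zero_mul, zero_mul]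
  rw [hreduce]
  exact Set.mul_mem_mul (act_monFn_mem_orbitSub subset_rfl hC₁ hrow₁ c₁)
    (Set.add_mem_add (act_monFn_mem_orbitSub sdiff_subset hC₂ hrow₂ c₂)
      (act_monFn_mem_orbitSub sdiff_subset hC₃ hrow₃ c₃))

/-- with `h = gcd(f,g)` for `f,g ∈ I_r`,
`LTA(m,2)·h · (LTA(m,2)·(f/h) + LTA(m,2)·(g/h))
  = LTA(m,2)_h·h · (LTA(m,2)_f·(f/h) + LTA(m,2)_g·(g/h))`. -/
theorem stmt9 (m : ℕ) (hm : 1 ≤ m) (I : Set (Finset (Fin m))) (hdec : Decreasing m I)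
    (r : ℕ) (hub : ∀ f ∈ I, f.card ≤ r) (hmax : ∃ f ∈ I, f.card = r)
    (f g : Finset (Fin m)) (hf : f ∈ I) (hg : g ∈ I)
    (hfr : f.card = r) (hgr : g.card = r) :
    orbit m (monFn m (f ∩ g)) *
        (orbit m (monFn m (f \ (f ∩ g))) + orbit m (monFn m (g \ (f ∩ g)))) =
      orbitSub m (f ∩ g) (monFn m (f ∩ g)) *
        (orbitSub m f (monFn m (f \ (f ∩ g))) +
          orbitSub m g (monFn m (g \ (f ∩ g)))) :=
  stmt9_general m f g
end

section
/- Let f = x_{i_1}x_{i_2} and g = x_{j_1}x_{j_2} be monomials with i_1 < i_2, j_1 < j_2, gcd(f,g) = 1 and i_2 > j_2. Then 2^{α_{f,g}} · |LTA(m,2)·f + LTA(m,2)·g| = |LTA(m,2)·f| · |LTA(m,2)·g|. -/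
open Finset Pointwise

section Aux
variable {m : ℕ}
def linF (β : Point m) : Fn m := fun u => ∑ j, β j * u j
def afF (q : Point m × ZMod 2) : Fn m := fun u => linF q.1 u + q.2
def epts (j : Fin m) : Point m := fun k => if k = j then 1 else 0

lemma linF_add (β : Point m) (u v : Point m) : linF β (u + v) = linF β u + linF β v := by
  simp [linF, Pi.add_apply, mul_add, Finset.sum_add_distrib]
lemma linF_smul (β : Point m) (t : ZMod 2) (u : Point m) : linF β (t • u) = t * linF β u := by
  simp [linF, Finset.mul_sum, mul_left_comm]
lemma linF_e (β : Point m) (j : Fin m) : linF β (epts j) = β j := by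
  simp [linF, epts]
lemma linF_addL (β γ : Point m) (u : Point m) : linF (β + γ) u = linF β u + linF γ u := by
  simp [linF, add_mul, Finset.sum_add_distrib]
lemma linF_smulL (t : ZMod 2) (β : Point m) (u : Point m) : linF (t • β) u = t * linF β u := by
  simp [linF, Finset.mul_sum, mul_assoc]
lemma linF_zero (β : Point m) : linF β 0 = 0 := by simp [linF]
lemma afF_shift (q : Point m × ZMod 2) (u v : Point m) :
    afF q (u + v) = afF q u + linF q.1 v := by
  simp [afF, linF_add]; ring
lemma afF_inj {q q' : Point m × ZMod 2} (h : afF q = afF q') : q = q' := by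
  have h0 := congrFun h 0
  simp [afF, linF_zero] at h0
  have hb : q.1 = q'.1 := by
    funext j
    have hj := congrFun h (epts j)
    simp [afF, linF_e, h0] at hj
    exact hj
  exact Prod.ext hb h0


-- decide helpers over ZMod 2
lemma z_ne (p q : ZMod 2) (h : p ≠ q) : (p = 1 ∧ q = 0) ∨ (p = 0 ∧ q = 1) := by revert h; revert p q; decide
lemma z_ne1 (p : ZMod 2) (h : p ≠ 1) : p = 0 := by revert h; revert p; decide
lemma z_lin1 (x y p : ZMod 2) : y * p + (x + y * p) * 1 = x := by revert x y p; decide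
lemma z_one (c : ZMod 2) : (c + 1) * 1 + c = 1 := by revert c; decide
lemma z_c1 (pv cβ cγ : ZMod 2) (h1 : pv + cβ = 1) (h2 : (pv + cβ) * (pv + cγ) = 0) : cγ = 1 * (cβ + 1) := by revert h1 h2; revert pv cβ cγ; decide
lemma z_contra (cβ cγ : ZMod 2) (h : (1 + cβ + cβ) * (1 + cγ + cγ) = 0) : False := by revert h; revert cβ cγ; decide
lemma linF_zeroL (u : Point m) : linF (0 : Point m) u = 0 := by simp [linF]

def anchP (i : Fin m) (β : Point m) : Prop := β i = 1 ∧ ∀ j, i < j → β j = 0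

lemma anchP_ne_zero {i : Fin m} {β : Point m} (h : anchP i β) : β ≠ 0 := by
  intro h0
  have := h.1
  rw [h0] at this
  simp at this

lemma exists_pt {β γ : Point m} (hβ : β ≠ 0) (hγ : γ ≠ 0) (hne : γ ≠ β) (x y : ZMod 2) :
    ∃ u, linF β u = x ∧ linF γ u = y := by
  have hj : ∃ j, β j ≠ γ j := by
    by_contra hc
    push_neg at hc
    exact hne (funext fun j => (hc j).symm)
  obtain ⟨j, hj⟩ := hj
  have hcases : (β j = 1 ∧ γ j = 0) ∨ (β j = 0 ∧ γ j = 1) := z_ne _ _ hj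
  rcases hcases with ⟨hb1, hg0⟩ | ⟨hb0, hg1⟩
  · -- β j = 1, γ j = 0 ; pick k with γ k = 1
    have hk : ∃ k, γ k = 1 := by
      by_contra hc
      push_neg at hc
      apply hγ; funext k
      exact z_ne1 _ (hc k)
    obtain ⟨k, hk⟩ := hk
    have hjk : j ≠ k := by intro h; rw [h, hk] at hg0; exact (by decide : (1:ZMod 2) ≠ 0) hg0
    refine ⟨y • epts k + (x + y * β k) • epts j, ?_, ?_⟩
    · rw [linF_add, linF_smul, linF_smul, linF_e, linF_e, hb1]
      exact z_lin1 x y (β k)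
    · rw [linF_add, linF_smul, linF_smul, linF_e, linF_e, hk, hg0]
      ring
  · have hk : ∃ k, β k = 1 := by
      by_contra hc
      push_neg at hc
      apply hβ; funext k
      exact z_ne1 _ (hc k)
    obtain ⟨k, hk⟩ := hk
    have hjk : j ≠ k := by intro h; rw [h, hk] at hb0; exact (by decide : (1:ZMod 2) ≠ 0) hb0
    refine ⟨x • epts k + (y + x * γ k) • epts j, ?_, ?_⟩
    · rw [linF_add, linF_smul, linF_smul, linF_e, linF_e, hk, hb0]; ring
    · rw [linF_add, linF_smul, linF_smul, linF_e, linF_e, hg1]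
      exact z_lin1 y x (γ k)

lemma exists_one {β : Point m} (hβ : β ≠ 0) (c : ZMod 2) : ∃ u, afF (β, c) u = 1 := by
  have hk : ∃ k, β k = 1 := by
    by_contra hc
    push_neg at hc
    apply hβ; funext k
    exact z_ne1 _ (hc k)
  obtain ⟨k, hk⟩ := hk
  refine ⟨(c + 1) • epts k, ?_⟩
  simp only [afF, linF_smul, linF_e, hk]
  exact z_one c

lemma mulZero {β : Point m} {cβ : ZMod 2} (hβ : β ≠ 0) {γ : Point m} {cγ : ZMod 2}
    (h : ∀ u, afF (β, cβ) u * afF (γ, cγ) u = 0) :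
    ∃ t : ZMod 2, γ = t • β ∧ cγ = t * (cβ + 1) := by
  by_cases hγ0 : γ = 0
  · refine ⟨0, by simp [hγ0], ?_⟩
    obtain ⟨u, hu⟩ := exists_one hβ cβ
    have := h u
    rw [hu, hγ0] at this
    simp only [afF, linF_zeroL, one_mul, zero_add] at this
    simp [this]
  · by_cases hγβ : γ = β
    · refine ⟨1, by simp [hγβ], ?_⟩
      obtain ⟨u, hu⟩ := exists_one hβ cβ
      have h2 := h u
      subst hγβ
      have h3 : linF γ u + cβ = 1 := hu
      simp only [afF] at h2
      exact z_c1 (linF γ u) cβ cγ h3 h2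
    · obtain ⟨u, h1, h2⟩ := exists_pt hβ hγ0 hγβ (1 + cβ) (1 + cγ)
      have := h u
      simp only [afF, h1, h2] at this
      exact absurd this (by exact fun hh => z_contra cβ cγ hh)

lemma z_move (v w z : ZMod 2) (h : v + w = z) : v = w + z := by revert h; revert v w z; decide
lemma pt_move {v w z : Point m} (h : v + w = z) : v = w + z := by
  funext j; exact z_move _ _ _ (congrFun h j)

lemma afF_add (β γ : Point m) (cb cg : ZMod 2) (u : Point m) :
    afF (β + γ, cb + cg) u = afF (β, cb) u + afF (γ, cg) u := by
  simp [afF, linF_addL]; ring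

lemma k_der1 (a b a' b' c d c' d' : ZMod 2) (h1 : a'*(b'+1) + c'*d' = a*(b+1) + c*d)
    (h2 : a'*b' + c'*d' = a*b + c*d) : a' = a := by revert h1 h2; revert a b a' b' c d c' d'; decide

lemma fiber2 {x y : Fin m} (hxy : x < y) {q1 q2 q1' q2' : Point m × ZMod 2}
    (h1 : anchP x q1.1) (h2 : anchP y q2.1) (h1' : anchP x q1'.1) (h2' : anchP y q2'.1)
    (hQ : ∀ u, afF q1' u * afF q2' u = afF q1 u * afF q2 u) :
    q1' = q1 ∧ ∃ t : ZMod 2, q2'.1 = q2.1 + t • q1.1 ∧ q2'.2 = q2.2 + t * (q1.2 + 1) := by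
  have hL : afF q1' = afF q1 := by
    funext u
    have e1 := hQ (u + epts y)
    have e2 := hQ u
    rw [afF_shift, afF_shift, afF_shift, afF_shift, linF_e, linF_e, linF_e, linF_e,
      h1.2 y hxy, h2.1, h1'.2 y hxy, h2'.1, add_zero, add_zero] at e1
    exact k_der1 _ _ _ _ 0 0 0 0 (by rw [mul_zero, add_zero, add_zero] at *; exact e1)
      (by rw [mul_zero, add_zero, add_zero] at *; exact e2)
  have hq1 : q1' = q1 := afF_inj hL
  subst hq1
  refine ⟨rfl, ?_⟩
  have hz : ∀ u, afF (q1'.1, q1'.2) u * afF (q2'.1 + q2.1, q2'.2 + q2.2) u = 0 := by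
    intro u
    rw [afF_add]
    have := hQ u
    revert this
    generalize afF q1' u = A; generalize afF q2' u = B; generalize afF q2 u = C
    revert A B C; decide
  obtain ⟨t, ht1, ht2⟩ := mulZero (anchP_ne_zero h1') hz
  exact ⟨t, pt_move ht1, z_move _ _ _ ht2⟩

lemma keyS2 (L M' s Z' W' M Z W : ZMod 2) (h1 : (L+1)*(M'+s) + Z'*W' = (L+1)*M + Z*W)
    (h2 : L*M' + Z'*W' = L*M + Z*W) : M' = M + s*(L+1) := by
  revert h1 h2; revert L M' s Z' W' M Z W; decide
lemma keyS3 (L M' Z' W' M Z W s : ZMod 2) (h1 : L*M' + Z'*W' = L*M + Z*W)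
    (h2 : M' = M + s*(L+1)) : Z'*W' = Z*W := by
  revert h1 h2; revert L M' Z' W' M Z W s; decide
lemma keyN (L M' t N' P' M N P : ZMod 2) (h1 : L*(M'+t) + N'*(P'+1) = L*M + N*(P+1))
    (h2 : L*M' + N'*P' = L*M + N*P) : N' = N + t*L := by
  revert h1 h2; revert L M' t N' P' M N P; decide
lemma keyM1 (L M' s N P' r M P : ZMod 2) (h1 : (L+1)*(M'+s) + N*(P'+r) = (L+1)*M + N*P)
    (h2 : L*M' + N*P' = L*M + N*P) : M' = M + s*(L+1) + r*N := by
  revert h1 h2; revert L M' s N P' r M P; decide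
lemma keyP1 (L M' M s r N P' P : ZMod 2) (h1 : L*M' + N*P' = L*M + N*P)
    (h2 : M' = M + s*(L+1) + r*N) : N*((P' + P) + r*L) = 0 := by
  revert h1 h2; revert L M' M s r N P' P; decide
lemma keyP2 (L M' σ N' P' ρ M N P : ZMod 2) (h1 : L*(M'+σ) + (N'+1)*(P'+ρ) = L*M + (N+1)*P)
    (h2 : L*M' + N'*P' = L*M + N*P) : P' = P + σ*L + ρ*(N'+1) := by
  revert h1 h2; revert L M' σ N' P' ρ M N P; decide
lemma keyM2 (L M' M N P P' t σ ρ : ZMod 2) (h1 : L*M' + (N+t*L)*P' = L*M + N*P)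
    (h2 : P' = P + σ*L + ρ*((N+t*L)+1)) : L*(((M' + M) + t*P) + σ*N + σ*t) = 0 := by
  revert h1 h2; revert L M' M N P P' t σ ρ; decide

lemma step1 {a b c d : Fin m} (hab : a < b) (hcb : c < b) (hdb : d < b)
    {q1 q2 q3 q4 q1' q2' q3' q4' : Point m × ZMod 2}
    (h1 : anchP a q1.1) (h2 : anchP b q2.1) (h3 : anchP c q3.1) (h4 : anchP d q4.1)
    (h1' : anchP a q1'.1) (h2' : anchP b q2'.1) (h3' : anchP c q3'.1) (h4' : anchP d q4'.1)
    (hQ : ∀ u, afF q1' u * afF q2' u + afF q3' u * afF q4' u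
        = afF q1 u * afF q2 u + afF q3 u * afF q4 u) : q1' = q1 := by
  apply afF_inj; funext u
  have e1 := hQ (u + epts b)
  have e2 := hQ u
  simp only [afF_shift, linF_e, h1.2 b hab, h2.1, h3.2 b hcb, h4.2 b hdb,
    h1'.2 b hab, h2'.1, h3'.2 b hcb, h4'.2 b hdb, add_zero] at e1
  exact k_der1 _ _ _ _ _ _ _ _ e1 e2

lemma z_vv (v : ZMod 2) : v + v * 1 = 0 := by revert v; decide

lemma fiber4_0 {a b c d : Fin m} (hab : a < b) (hcd : c < d) (hdb : d < b) (hda : d < a)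
    {q1 q2 q3 q4 q1' q2' q3' q4' : Point m × ZMod 2}
    (h1 : anchP a q1.1) (h2 : anchP b q2.1) (h3 : anchP c q3.1) (h4 : anchP d q4.1)
    (h1' : anchP a q1'.1) (h2' : anchP b q2'.1) (h3' : anchP c q3'.1) (h4' : anchP d q4'.1)
    (hQ : ∀ u, afF q1' u * afF q2' u + afF q3' u * afF q4' u
        = afF q1 u * afF q2 u + afF q3 u * afF q4 u) :
    ∃ s t : ZMod 2, q1' = q1 ∧ q3' = q3 ∧
      q2'.1 = q2.1 + s • q1.1 ∧ q2'.2 = q2.2 + s * (q1.2 + 1) ∧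
      q4'.1 = q4.1 + t • q3.1 ∧ q4'.2 = q4.2 + t * (q3.2 + 1) := by
  have hca : c < a := hcd.trans hda
  have hcb : c < b := hcd.trans hdb
  have hq1 : q1' = q1 := step1 hab hcb hdb h1 h2 h3 h4 h1' h2' h3' h4' hQ
  rw [hq1] at hQ
  set w : Point m := epts a + q2.1 a • epts b with hw
  have v1 : linF q1.1 w = 1 := by
    rw [hw, linF_add, linF_smul, linF_e, linF_e, h1.1, h1.2 b hab]; ring
  have v2 : linF q2.1 w = 0 := by
    rw [hw, linF_add, linF_smul, linF_e, linF_e, h2.1]; exact z_vv _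
  have v3 : linF q3.1 w = 0 := by
    rw [hw, linF_add, linF_smul, linF_e, linF_e, h3.2 a hca, h3.2 b hcb]; ring
  have v4 : linF q4.1 w = 0 := by
    rw [hw, linF_add, linF_smul, linF_e, linF_e, h4.2 a hda, h4.2 b hdb]; ring
  have v3' : linF q3'.1 w = 0 := by
    rw [hw, linF_add, linF_smul, linF_e, linF_e, h3'.2 a hca, h3'.2 b hcb]; ring
  have v4' : linF q4'.1 w = 0 := by
    rw [hw, linF_add, linF_smul, linF_e, linF_e, h4'.2 a hda, h4'.2 b hdb]; ring
  set s := linF q2'.1 w with hs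
  have hM : ∀ u, afF q2' u = afF q2 u + s * (afF q1 u + 1) := by
    intro u
    have e1 := hQ (u + w)
    have e2 := hQ u
    simp only [afF_shift, v1, v2, v3, v4, v3', v4', ← hs, add_zero] at e1
    exact keyS2 _ _ _ _ _ _ _ _ e1 e2
  have hq2 : q2' = (q2.1 + s • q1.1, q2.2 + s * (q1.2 + 1)) := by
    apply afF_inj; funext u
    rw [hM u]; simp only [afF, linF_addL, linF_smulL]; ring
  have hNP : ∀ u, afF q3' u * afF q4' u = afF q3 u * afF q4 u := fun u =>
    keyS3 _ _ _ _ _ _ _ _ (hQ u) (hM u)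
  obtain ⟨hq3, t, ht1, ht2⟩ := fiber2 hcd h3 h4 h3' h4' hNP
  exact ⟨s, t, hq1, hq3, by rw [hq2], by rw [hq2], ht1, ht2⟩

lemma z_x4 (v z : ZMod 2) : v + z * 0 + v * 1 = 0 := by revert v z; decide
lemma z_t0 (t : ZMod 2) (h : (0:ZMod 2) = 0 + t * 1) : t = 0 := by revert h; revert t; decide
lemma z_mv3 (v' v x e : ZMod 2) (h : (v' + v) + x = e) : v' = v + x + e := by
  revert h; revert v' v x e; decide

lemma fiber4_1 {a b c d : Fin m} (hca : c < a) (had : a < d) (hdb : d < b)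
    {q1 q2 q3 q4 q1' q2' q3' q4' : Point m × ZMod 2}
    (h1 : anchP a q1.1) (h2 : anchP b q2.1) (h3 : anchP c q3.1) (h4 : anchP d q4.1)
    (h1' : anchP a q1'.1) (h2' : anchP b q2'.1) (h3' : anchP c q3'.1) (h4' : anchP d q4'.1)
    (hQ : ∀ u, afF q1' u * afF q2' u + afF q3' u * afF q4' u
        = afF q1 u * afF q2 u + afF q3 u * afF q4 u) :
    ∃ s r ε : ZMod 2, q1' = q1 ∧ q3' = q3 ∧
      q2'.1 = q2.1 + s • q1.1 + r • q3.1 ∧ q2'.2 = q2.2 + s * (q1.2 + 1) + r * q3.2 ∧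
      q4'.1 = q4.1 + r • q1.1 + ε • q3.1 ∧ q4'.2 = q4.2 + r * q1.2 + ε * (q3.2 + 1) := by
  have hab : a < b := had.trans hdb
  have hcd : c < d := hca.trans had
  have hcb : c < b := hcd.trans hdb
  have hq1 : q1' = q1 := step1 hab hcb hdb h1 h2 h3 h4 h1' h2' h3' h4' hQ
  rw [hq1] at hQ
  set w1 : Point m := epts d + q2.1 d • epts b with hw1
  have u1 : linF q1.1 w1 = 0 := by
    rw [hw1, linF_add, linF_smul, linF_e, linF_e, h1.2 d had, h1.2 b hab]; ring
  have u2 : linF q2.1 w1 = 0 := by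
    rw [hw1, linF_add, linF_smul, linF_e, linF_e, h2.1]; exact z_vv _
  have u3 : linF q3.1 w1 = 0 := by
    rw [hw1, linF_add, linF_smul, linF_e, linF_e, h3.2 d hcd, h3.2 b hcb]; ring
  have u4 : linF q4.1 w1 = 1 := by
    rw [hw1, linF_add, linF_smul, linF_e, linF_e, h4.1, h4.2 b hdb]; ring
  have u3' : linF q3'.1 w1 = 0 := by
    rw [hw1, linF_add, linF_smul, linF_e, linF_e, h3'.2 d hcd, h3'.2 b hcb]; ring
  have u4' : linF q4'.1 w1 = 1 := by
    rw [hw1, linF_add, linF_smul, linF_e, linF_e, h4'.1, h4'.2 b hdb]; ring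
  set t := linF q2'.1 w1 with hts
  have hN : ∀ u, afF q3' u = afF q3 u + t * afF q1 u := by
    intro u
    have e1 := hQ (u + w1)
    have e2 := hQ u
    simp only [afF_shift, u1, u2, u3, u4, u3', u4', ← hts, add_zero] at e1
    exact keyN _ _ _ _ _ _ _ _ e1 e2
  have hq3 : q3' = q3 := by
    have hq3' : q3' = (q3.1 + t • q1.1, q3.2 + t * q1.2) := by
      apply afF_inj; funext u
      rw [hN u]; simp only [afF, linF_addL, linF_smulL]; ring
    have ht0 : t = 0 := by
      have h5 := congrFun (congrArg Prod.fst hq3') a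
      simp only [Pi.add_apply, Pi.smul_apply, smul_eq_mul, h3'.2 a hca, h3.2 a hca, h1.1] at h5
      exact z_t0 t h5
    rw [hq3', ht0]; simp
  rw [hq3] at hQ
  set w2 : Point m := (epts a + q2.1 a • epts b) + q4.1 a • w1 with hw2
  have lw2 : ∀ β : Point m, linF β w2 = β a + q2.1 a * β b + q4.1 a * linF β w1 := by
    intro β
    rw [hw2, linF_add, linF_add, linF_smul, linF_smul, linF_e, linF_e]
  have x1 : linF q1.1 w2 = 1 := by rw [lw2, h1.1, h1.2 b hab, u1]; ring
  have x2 : linF q2.1 w2 = 0 := by rw [lw2, h2.1, u2]; rw [mul_zero, add_zero]; exact z_vv _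
  have x3 : linF q3.1 w2 = 0 := by rw [lw2, h3.2 a hca, h3.2 b hcb, u3]; ring
  have x4 : linF q4.1 w2 = 0 := by
    rw [lw2, h4.2 b hdb, u4]
    exact z_x4 _ _
  have x3' : linF q3'.1 w2 = 0 := by rw [hq3]; exact x3
  set s := linF q2'.1 w2 with hss
  set r := linF q4'.1 w2 with hrs
  have hM : ∀ u, afF q2' u = afF q2 u + s * (afF q1 u + 1) + r * afF q3 u := by
    intro u
    have e1 := hQ (u + w2)
    have e2 := hQ u
    simp only [afF_shift, x1, x2, x3, x4, x3', ← hss, ← hrs, add_zero] at e1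
    exact keyM1 _ _ _ _ _ _ _ _ e1 e2
  have hq2 : q2' = (q2.1 + s • q1.1 + r • q3.1, q2.2 + s * (q1.2 + 1) + r * q3.2) := by
    apply afF_inj; funext u
    rw [hM u]; simp only [afF, linF_addL, linF_smulL]; ring
  have hz : ∀ u, afF q3 u * afF ((q4'.1 + q4.1) + r • q1.1, (q4'.2 + q4.2) + r * q1.2) u = 0 := by
    intro u
    have hx : afF ((q4'.1 + q4.1) + r • q1.1, (q4'.2 + q4.2) + r * q1.2) u
        = (afF q4' u + afF q4 u) + r * afF q1 u := by
      simp only [afF, linF_addL, linF_smulL]; ring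
    rw [hx]
    exact keyP1 _ _ _ _ _ _ _ _ (hQ u) (hM u)
  obtain ⟨ε, he1, he2⟩ := mulZero (anchP_ne_zero h3) hz
  refine ⟨s, r, ε, hq1, hq3, by rw [hq2], by rw [hq2], ?_, ?_⟩
  · funext j
    have := congrFun he1 j
    simp only [Pi.add_apply, Pi.smul_apply, smul_eq_mul] at this ⊢
    exact z_mv3 _ _ _ _ this
  · exact z_mv3 _ _ _ _ he2

lemma z_y2 (v z : ZMod 2) : v + v * 1 + z * 0 = 0 := by revert v z; decide
lemma z_mv4 (v' v x y e : ZMod 2) (h : v' + v + x + y = e) : v' = v + x + y + e := by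
  revert h; revert v' v x y e; decide
lemma z_mv5 (v' v x y z e : ZMod 2) (h : v' + v + x + y + z = e) : v' = v + x + y + z + e := by
  revert h; revert v' v x y z e; decide

lemma fiber4_2 {a b c d : Fin m} (hac : a < c) (hcd : c < d) (hdb : d < b)
    {q1 q2 q3 q4 q1' q2' q3' q4' : Point m × ZMod 2}
    (h1 : anchP a q1.1) (h2 : anchP b q2.1) (h3 : anchP c q3.1) (h4 : anchP d q4.1)
    (h1' : anchP a q1'.1) (h2' : anchP b q2'.1) (h3' : anchP c q3'.1) (h4' : anchP d q4'.1)
    (hQ : ∀ u, afF q1' u * afF q2' u + afF q3' u * afF q4' u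
        = afF q1 u * afF q2 u + afF q3 u * afF q4 u) :
    ∃ t σ ρ ε : ZMod 2, q1' = q1 ∧
      q3'.1 = q3.1 + t • q1.1 ∧ q3'.2 = q3.2 + t * q1.2 ∧
      q4'.1 = q4.1 + σ • q1.1 + ρ • (q3.1 + t • q1.1) ∧
      q4'.2 = q4.2 + σ * q1.2 + ρ * (q3.2 + t * q1.2 + 1) ∧
      q2'.1 = q2.1 + t • q4.1 + σ • q3.1 + ε • q1.1 ∧
      q2'.2 = q2.2 + t * q4.2 + σ * q3.2 + σ * t + ε * (q1.2 + 1) := by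
  have had : a < d := hac.trans hcd
  have hab : a < b := had.trans hdb
  have hcb : c < b := hcd.trans hdb
  have hq1 : q1' = q1 := step1 hab hcb hdb h1 h2 h3 h4 h1' h2' h3' h4' hQ
  rw [hq1] at hQ
  set w1 : Point m := epts d + q2.1 d • epts b with hw1
  have u1 : linF q1.1 w1 = 0 := by
    rw [hw1, linF_add, linF_smul, linF_e, linF_e, h1.2 d had, h1.2 b hab]; ring
  have u2 : linF q2.1 w1 = 0 := by
    rw [hw1, linF_add, linF_smul, linF_e, linF_e, h2.1]; exact z_vv _
  have u3 : linF q3.1 w1 = 0 := by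
    rw [hw1, linF_add, linF_smul, linF_e, linF_e, h3.2 d hcd, h3.2 b hcb]; ring
  have u4 : linF q4.1 w1 = 1 := by
    rw [hw1, linF_add, linF_smul, linF_e, linF_e, h4.1, h4.2 b hdb]; ring
  have u3' : linF q3'.1 w1 = 0 := by
    rw [hw1, linF_add, linF_smul, linF_e, linF_e, h3'.2 d hcd, h3'.2 b hcb]; ring
  have u4' : linF q4'.1 w1 = 1 := by
    rw [hw1, linF_add, linF_smul, linF_e, linF_e, h4'.1, h4'.2 b hdb]; ring
  set t := linF q2'.1 w1 with hts
  have hN : ∀ u, afF q3' u = afF q3 u + t * afF q1 u := by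
    intro u
    have e1 := hQ (u + w1)
    have e2 := hQ u
    simp only [afF_shift, u1, u2, u3, u4, u3', u4', ← hts, add_zero] at e1
    exact keyN _ _ _ _ _ _ _ _ e1 e2
  have hq3 : q3' = (q3.1 + t • q1.1, q3.2 + t * q1.2) := by
    apply afF_inj; funext u
    rw [hN u]; simp only [afF, linF_addL, linF_smulL]; ring
  set w2 : Point m := (epts c + q2.1 c • epts b) + q4.1 c • w1 with hw2
  have lw2 : ∀ β : Point m, linF β w2 = β c + q2.1 c * β b + q4.1 c * linF β w1 := by
    intro β
    rw [hw2, linF_add, linF_add, linF_smul, linF_smul, linF_e, linF_e]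
  have y1 : linF q1.1 w2 = 0 := by rw [lw2, h1.2 c hac, h1.2 b hab, u1]; ring
  have y2 : linF q2.1 w2 = 0 := by rw [lw2, h2.1, u2]; exact z_y2 _ _
  have y3 : linF q3.1 w2 = 1 := by rw [lw2, h3.1, h3.2 b hcb, u3]; ring
  have y4 : linF q4.1 w2 = 0 := by rw [lw2, h4.2 b hdb, u4]; exact z_x4 _ _
  have y3' : linF q3'.1 w2 = 1 := by
    have : q3'.1 = q3.1 + t • q1.1 := by rw [hq3]
    rw [this, linF_addL, linF_smulL, y3, y1]; ring
  set σ := linF q2'.1 w2 with hσs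
  set ρ := linF q4'.1 w2 with hρs
  have hP : ∀ u, afF q4' u = afF q4 u + σ * afF q1 u + ρ * (afF q3' u + 1) := by
    intro u
    have e1 := hQ (u + w2)
    have e2 := hQ u
    simp only [afF_shift, y1, y2, y3, y4, y3', ← hσs, ← hρs, add_zero] at e1
    exact keyP2 _ _ _ _ _ _ _ _ _ e1 e2
  have hq4 : q4' = (q4.1 + σ • q1.1 + ρ • (q3.1 + t • q1.1),
      q4.2 + σ * q1.2 + ρ * (q3.2 + t * q1.2 + 1)) := by
    apply afF_inj; funext u
    rw [hP u, hN u]; simp only [afF, linF_addL, linF_smulL]; ring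
  have hz : ∀ u, afF q1 u * afF ((q2'.1 + q2.1) + t • q4.1 + σ • q3.1,
      (q2'.2 + q2.2) + t * q4.2 + σ * q3.2 + σ * t) u = 0 := by
    intro u
    have hx : afF ((q2'.1 + q2.1) + t • q4.1 + σ • q3.1,
        (q2'.2 + q2.2) + t * q4.2 + σ * q3.2 + σ * t) u
        = ((afF q2' u + afF q2 u) + t * afF q4 u) + σ * afF q3 u + σ * t := by
      simp only [afF, linF_addL, linF_smulL]; ring
    rw [hx]
    have e2 := hQ u
    rw [hN u] at e2
    have hP' : afF q4' u = afF q4 u + σ * afF q1 u + ρ * ((afF q3 u + t * afF q1 u) + 1) := by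
      rw [hP u, hN u]
    exact keyM2 _ _ _ _ _ _ _ _ _ e2 hP'
  obtain ⟨ε, he1, he2⟩ := mulZero (anchP_ne_zero h1) hz
  refine ⟨t, σ, ρ, ε, hq1, by rw [hq3], by rw [hq3], by rw [hq4], by rw [hq4], ?_, ?_⟩
  · funext j
    have := congrFun he1 j
    simp only [Pi.add_apply, Pi.smul_apply, smul_eq_mul] at this ⊢
    exact z_mv4 _ _ _ _ _ this
  · exact z_mv5 _ _ _ _ _ _ he2

instance (i : Fin m) (β : Point m) : Decidable (anchP i β) := by
  unfold anchP; infer_instance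

def anchF (i : Fin m) : Finset (Point m × ZMod 2) :=
  Finset.univ.filter (fun q => anchP i q.1)

def phi2 (p : (Point m × ZMod 2) × (Point m × ZMod 2)) : Fn m :=
  fun u => afF p.1 u * afF p.2 u

def phi4 (p : ((Point m × ZMod 2) × (Point m × ZMod 2)) ×
    ((Point m × ZMod 2) × (Point m × ZMod 2))) : Fn m :=
  fun u => phi2 p.1 u + phi2 p.2 u

lemma orbit_eq {x y : Fin m} (hxy : x < y) :
    orbit m (monFn m {x, y}) = ↑((anchF x ×ˢ anchF y).image phi2) := by
  ext Q
  simp only [orbit, Set.mem_setOf_eq, Finset.coe_image, Set.mem_image, Finset.mem_coe,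
    Finset.mem_product, anchF, Finset.mem_filter, Finset.mem_univ, true_and]
  constructor
  · rintro ⟨B, ε, hB, rfl⟩
    refine ⟨((B x, ε x), (B y, ε y)),
      ⟨⟨hB.1 x, fun j hj => hB.2 x j hj⟩, ⟨hB.1 y, fun j hj => hB.2 y j hj⟩⟩, ?_⟩
    funext u
    simp only [phi2, act, monFn, affMap, afF, linF]
    rw [Finset.prod_pair (ne_of_lt hxy)]
  · rintro ⟨p, ⟨hp1, hp2⟩, rfl⟩
    refine ⟨fun i => if i = x then p.1.1 else if i = y then p.2.1 else
        fun j => if j = i then 1 else 0,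
      fun i => if i = x then p.1.2 else if i = y then p.2.2 else 0, ⟨?_, ?_⟩, ?_⟩
    · intro i
      by_cases hix : i = x
      · subst hix; simp [hp1.1]
      · by_cases hiy : i = y
        · subst hiy; simp [hix, hp2.1]
        · simp [hix, hiy]
    · intro i j hij
      by_cases hix : i = x
      · subst hix; simp [hp1.2 j hij]
      · by_cases hiy : i = y
        · subst hiy; simp [hix, hp2.2 j hij]
        · simp [hix, hiy, (ne_of_lt hij).symm]
    · funext u
      simp only [phi2, act, monFn, affMap, afF, linF]
      rw [Finset.prod_pair (ne_of_lt hxy)]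
      have hyx : ¬ (y = x) := (ne_of_lt hxy).symm
      simp [hyx]

lemma sum_eq {a b c d : Fin m} (hab : a < b) (hcd : c < d) :
    orbit m (monFn m {a, b}) + orbit m (monFn m {c, d}) =
      ↑((((anchF a ×ˢ anchF b) ×ˢ (anchF c ×ˢ anchF d))).image phi4) := by
  rw [orbit_eq hab, orbit_eq hcd]
  ext Q
  simp only [Set.mem_add, Finset.coe_image, Set.mem_image, Finset.mem_coe,
    Finset.mem_product]
  constructor
  · rintro ⟨A, ⟨p1, hp1, rfl⟩, B, ⟨p2, hp2, rfl⟩, rfl⟩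
    exact ⟨(p1, p2), ⟨hp1, hp2⟩, rfl⟩
  · rintro ⟨p, ⟨hp1, hp2⟩, rfl⟩
    exact ⟨phi2 p.1, ⟨p.1, hp1, rfl⟩, phi2 p.2, ⟨p.2, hp2, rfl⟩, rfl⟩

lemma count_fibers {α β : Type*} [DecidableEq β] (s : Finset α) (f : α → β) (n : ℕ)
    (h : ∀ q ∈ s, (s.filter fun q' => f q' = f q).card = n) :
    s.card = n * (s.image f).card := by
  rw [Finset.card_eq_sum_card_fiberwise (fun x hx => Finset.mem_image_of_mem f hx)]
  rw [Finset.sum_congr rfl (fun y hy => ?_), Finset.sum_const, smul_eq_mul, mul_comm]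
  obtain ⟨q, hq, rfl⟩ := Finset.mem_image.mp hy
  exact h q hq

lemma anchP_add {x y : Fin m} {β β' : Point m} (h : anchP y β) (h' : anchP x β')
    (hxy : x < y) (t : ZMod 2) : anchP y (β + t • β') := by
  refine ⟨?_, fun j hj => ?_⟩
  · simp only [Pi.add_apply, Pi.smul_apply, smul_eq_mul, h.1, h'.2 y hxy, mul_zero, add_zero]
  · simp only [Pi.add_apply, Pi.smul_apply, smul_eq_mul, h.2 j hj, h'.2 j (hxy.trans hj),
      mul_zero, add_zero]

lemma afF_upd {β γ : Point m} {c e : ZMod 2} (t : ZMod 2) (u : Point m) :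
    afF (β + t • γ, c + t * e) u = afF (β, c) u + t * (afF (γ, e) u + e) - t * e := by
  simp only [afF, linF_addL, linF_smulL]; ring

lemma afF_flip {β γ : Point m} {c e : ZMod 2} (u : Point m) :
    afF (β + γ, c + e + 1) u = afF (β, c) u + afF (γ, e) u + 1 := by
  simp only [afF, linF_addL]; ring

lemma z_flip (L M : ZMod 2) : L * (M + L + 1) = L * M := by revert L M; decide
lemma z_selfne (v : ZMod 2) : v ≠ v + 1 := by revert v; decide
lemma z_cases (t : ZMod 2) : t = 0 ∨ t = 1 := by revert t; decide

lemma fibcard2 {x y : Fin m} (hxy : x < y) (q : (Point m × ZMod 2) × (Point m × ZMod 2))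
    (hq : q ∈ anchF x ×ˢ anchF y) :
    ((anchF x ×ˢ anchF y).filter fun q' => phi2 q' = phi2 q).card = 2 := by
  simp only [anchF, Finset.mem_product, Finset.mem_filter, Finset.mem_univ, true_and] at hq
  obtain ⟨h1, h2⟩ := hq
  set fq : (Point m × ZMod 2) × (Point m × ZMod 2) :=
    (q.1, (q.2.1 + q.1.1, q.2.2 + q.1.2 + 1)) with hfq
  have hne : q ≠ fq := by
    intro h
    have := congrFun (congrArg (fun r => r.2.1) h) x
    simp only [hfq, Pi.add_apply, h1.1] at this
    exact z_selfne _ this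
  have hset : ((anchF x ×ˢ anchF y).filter fun q' => phi2 q' = phi2 q) = {q, fq} := by
    ext q'
    simp only [anchF, Finset.mem_product, Finset.mem_filter, Finset.mem_univ, true_and,
      Finset.mem_insert, Finset.mem_singleton]
    constructor
    · rintro ⟨⟨h1', h2'⟩, hphi⟩
      have hfib := fiber2 hxy h1 h2 h1' h2' (fun u => congrFun hphi u)
      obtain ⟨hq1, t, ht1, ht2⟩ := hfib
      rcases z_cases t with rfl | rfl
      · left
        rw [zero_smul, add_zero] at ht1
        rw [zero_mul, add_zero] at ht2
        exact Prod.ext hq1 (Prod.ext ht1 ht2)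
      · right
        rw [one_smul] at ht1
        rw [one_mul] at ht2
        refine Prod.ext hq1 (Prod.ext ht1 ?_)
        rw [ht2]; ring
    · intro h
      rcases h with rfl | rfl
      · exact ⟨⟨h1, h2⟩, rfl⟩
      · refine ⟨⟨h1, ?_⟩, ?_⟩
        · have ha := anchP_add h2 h1 hxy 1
          rw [one_smul] at ha
          exact ha
        · funext u
          simp only [phi2, hfq, afF_flip]
          exact z_flip _ _
  rw [hset]
  rw [Finset.card_insert_of_notMem (by simp [hne]), Finset.card_singleton]

lemma main_count {a b c d : Fin m} (hab : a < b) (hcd : c < d) (hdb : d < b) (k : ℕ)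
    (hfib : ∀ p ∈ (anchF a ×ˢ anchF b) ×ˢ (anchF c ×ˢ anchF d),
      (((anchF a ×ˢ anchF b) ×ˢ (anchF c ×ˢ anchF d)).filter
        fun p' => phi4 p' = phi4 p).card = 2 ^ (k + 2)) :
    2 ^ k * (orbit m (monFn m {a, b}) + orbit m (monFn m {c, d})).ncard =
      (orbit m (monFn m {a, b})).ncard * (orbit m (monFn m {c, d})).ncard := by
  rw [sum_eq hab hcd, orbit_eq hab, orbit_eq hcd, Set.ncard_coe_finset,
    Set.ncard_coe_finset, Set.ncard_coe_finset]
  have hF := count_fibers (anchF a ×ˢ anchF b) phi2 2 (fibcard2 hab)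
  have hG := count_fibers (anchF c ×ˢ anchF d) phi2 2 (fibcard2 hcd)
  have hS := count_fibers ((anchF a ×ˢ anchF b) ×ˢ (anchF c ×ˢ anchF d)) phi4
    (2 ^ (k + 2)) hfib
  have hprod : ((anchF a ×ˢ anchF b) ×ˢ (anchF c ×ˢ anchF d) :
      Finset (((Point m × ZMod 2) × (Point m × ZMod 2)) ×
        ((Point m × ZMod 2) × (Point m × ZMod 2)))).card
      = (anchF a ×ˢ anchF b).card * ((anchF c ×ˢ anchF d)).card := Finset.card_product _ _
  rw [hS, hF, hG] at hprod
  apply Nat.eq_of_mul_eq_mul_left (show 0 < 4 by norm_num)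
  calc 4 * (2 ^ k * (Finset.image phi4 ((anchF a ×ˢ anchF b) ×ˢ (anchF c ×ˢ anchF d))).card)
      = 2 ^ (k + 2) * (Finset.image phi4 ((anchF a ×ˢ anchF b) ×ˢ (anchF c ×ˢ anchF d))).card := by
        rw [pow_add]
        ring
    _ = 4 * ((Finset.image phi2 (anchF a ×ˢ anchF b)).card *
        (Finset.image phi2 (anchF c ×ˢ anchF d)).card) := by
        rw [hprod]; ring

lemma zi0 (W v v' : ZMod 2) (h : W + v * 1 = W + v' * 1) : v = v' := by
  revert h; revert W v v'; decide
lemma z_prod0 (L M N P s t : ZMod 2) :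
    L * (M + s * (L + 1)) + N * (P + t * (N + 1)) = L * M + N * P := by
  revert L M N P s t; decide
lemma afF_comb1 {β γ : Point m} {c e : ZMod 2} (t : ZMod 2) (u : Point m) :
    afF (β + t • γ, c + t * (e + 1)) u = afF (β, c) u + t * (afF (γ, e) u + 1) := by
  simp only [afF, linF_addL, linF_smulL]; ring

def mv0 (p : ((Point m × ZMod 2) × (Point m × ZMod 2)) ×
    ((Point m × ZMod 2) × (Point m × ZMod 2))) (z : ZMod 2 × ZMod 2) :
    ((Point m × ZMod 2) × (Point m × ZMod 2)) ×
    ((Point m × ZMod 2) × (Point m × ZMod 2)) :=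
  ((p.1.1, (p.1.2.1 + z.1 • p.1.1.1, p.1.2.2 + z.1 * (p.1.1.2 + 1))),
   (p.2.1, (p.2.2.1 + z.2 • p.2.1.1, p.2.2.2 + z.2 * (p.2.1.2 + 1))))

lemma fibcard4_0 {a b c d : Fin m} (hab : a < b) (hcd : c < d) (hdb : d < b) (hda : d < a)
    (p : ((Point m × ZMod 2) × (Point m × ZMod 2)) ×
      ((Point m × ZMod 2) × (Point m × ZMod 2)))
    (hp : p ∈ (anchF a ×ˢ anchF b) ×ˢ (anchF c ×ˢ anchF d)) :
    (((anchF a ×ˢ anchF b) ×ˢ (anchF c ×ˢ anchF d)).filter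
      fun p' => phi4 p' = phi4 p).card = 2 ^ (0 + 2) := by
  simp only [anchF, Finset.mem_product, Finset.mem_filter, Finset.mem_univ, true_and] at hp
  obtain ⟨⟨h1, h2⟩, h3, h4⟩ := hp
  have hset : (((anchF a ×ˢ anchF b) ×ˢ (anchF c ×ˢ anchF d)).filter
      fun p' => phi4 p' = phi4 p) = Finset.image (mv0 p) Finset.univ := by
    ext p'
    simp only [anchF, Finset.mem_product, Finset.mem_filter, Finset.mem_univ, true_and,
      Finset.mem_image, Finset.mem_univ, true_and]
    constructor
    · rintro ⟨⟨⟨h1', h2'⟩, h3', h4'⟩, hphi⟩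
      obtain ⟨s, t, e1, e3, e21, e22, e41, e42⟩ :=
        fiber4_0 hab hcd hdb hda h1 h2 h3 h4 h1' h2' h3' h4' (fun u => congrFun hphi u)
      exact ⟨(s, t), Prod.ext (Prod.ext e1.symm (Prod.ext e21.symm e22.symm))
        (Prod.ext e3.symm (Prod.ext e41.symm e42.symm))⟩
    · rintro ⟨z, rfl⟩
      refine ⟨⟨⟨h1, anchP_add h2 h1 hab z.1⟩, h3, anchP_add h4 h3 hcd z.2⟩, ?_⟩
      funext u
      simp only [phi4, phi2, mv0, afF_comb1]
      exact z_prod0 _ _ _ _ _ _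
  rw [hset]
  rw [Finset.card_image_of_injective _ ?_, Finset.card_univ]
  · simp
  · intro z z' h
    have h2c := congrFun (congrArg (fun r => r.1.2.1) h) a
    have h4c := congrFun (congrArg (fun r => r.2.2.1) h) c
    simp only [mv0, Pi.add_apply, Pi.smul_apply, smul_eq_mul, h1.1, h3.1] at h2c h4c
    exact Prod.ext (zi0 _ _ _ h2c) (zi0 _ _ _ h4c)

lemma zi1 (W s r s' r' : ZMod 2) (h : W + s * 1 + r * 0 = W + s' * 1 + r' * 0) : s = s' := by
  revert h; revert W s r s' r'; decide
lemma zi2 (W X r e e' : ZMod 2) (h : W + r * X + e * 1 = W + r * X + e' * 1) : e = e' := by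
  revert h; revert W X r e e'; decide
lemma zi3 (W σ ρ σ' ρ' t t' : ZMod 2)
    (h : W + σ * 0 + ρ * (1 + t * 0) = W + σ' * 0 + ρ' * (1 + t' * 0)) : ρ = ρ' := by
  revert h; revert W σ ρ σ' ρ' t t'; decide
lemma zi4 (W X σ σ' ρ : ZMod 2) (h : W + σ * 1 + ρ * X = W + σ' * 1 + ρ * X) : σ = σ' := by
  revert h; revert W X σ σ' ρ; decide
lemma z_prod1 (L M N P s r e : ZMod 2) :
    L * (M + s * (L + 1) + r * N) + N * (P + r * L + e * (N + 1)) = L * M + N * P := by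
  revert L M N P s r e; decide
lemma z_prod2 (L M N W t σ ρ e : ZMod 2) :
    L * (M + t * W + σ * N + σ * t + e * (L + 1)) +
      (N + t * L) * (W + σ * L + ρ * ((N + t * L) + 1)) = L * M + N * W := by
  revert L M N W t σ ρ e; decide

lemma afF_mv1M {β1 β2 β3 : Point m} {c1 c2 c3 : ZMod 2} (s r : ZMod 2) (u : Point m) :
    afF (β2 + s • β1 + r • β3, c2 + s * (c1 + 1) + r * c3) u
      = afF (β2, c2) u + s * (afF (β1, c1) u + 1) + r * afF (β3, c3) u := by
  simp only [afF, linF_addL, linF_smulL]; ring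
lemma afF_mv1P {β1 β3 β4 : Point m} {c1 c3 c4 : ZMod 2} (r e : ZMod 2) (u : Point m) :
    afF (β4 + r • β1 + e • β3, c4 + r * c1 + e * (c3 + 1)) u
      = afF (β4, c4) u + r * afF (β1, c1) u + e * (afF (β3, c3) u + 1) := by
  simp only [afF, linF_addL, linF_smulL]; ring
lemma afF_mv2N {β1 β3 : Point m} {c1 c3 : ZMod 2} (t : ZMod 2) (u : Point m) :
    afF (β3 + t • β1, c3 + t * c1) u = afF (β3, c3) u + t * afF (β1, c1) u := by
  simp only [afF, linF_addL, linF_smulL]; ring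
lemma afF_mv2P {β1 β3 β4 : Point m} {c1 c3 c4 : ZMod 2} (t σ ρ : ZMod 2) (u : Point m) :
    afF (β4 + σ • β1 + ρ • (β3 + t • β1), c4 + σ * c1 + ρ * (c3 + t * c1 + 1)) u
      = afF (β4, c4) u + σ * afF (β1, c1) u
        + ρ * ((afF (β3, c3) u + t * afF (β1, c1) u) + 1) := by
  simp only [afF, linF_addL, linF_smulL]; ring
lemma afF_mv2M {β1 β2 β3 β4 : Point m} {c1 c2 c3 c4 : ZMod 2} (t σ e : ZMod 2) (u : Point m) :
    afF (β2 + t • β4 + σ • β3 + e • β1, c2 + t * c4 + σ * c3 + σ * t + e * (c1 + 1)) u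
      = afF (β2, c2) u + t * afF (β4, c4) u + σ * afF (β3, c3) u + σ * t
        + e * (afF (β1, c1) u + 1) := by
  simp only [afF, linF_addL, linF_smulL]; ring

def mv1 (p : ((Point m × ZMod 2) × (Point m × ZMod 2)) ×
    ((Point m × ZMod 2) × (Point m × ZMod 2))) (z : ZMod 2 × ZMod 2 × ZMod 2) :
    ((Point m × ZMod 2) × (Point m × ZMod 2)) ×
    ((Point m × ZMod 2) × (Point m × ZMod 2)) :=
  ((p.1.1, (p.1.2.1 + z.1 • p.1.1.1 + z.2.1 • p.2.1.1,
      p.1.2.2 + z.1 * (p.1.1.2 + 1) + z.2.1 * p.2.1.2)),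
   (p.2.1, (p.2.2.1 + z.2.1 • p.1.1.1 + z.2.2 • p.2.1.1,
      p.2.2.2 + z.2.1 * p.1.1.2 + z.2.2 * (p.2.1.2 + 1))))

lemma fibcard4_1 {a b c d : Fin m} (hca : c < a) (had : a < d) (hdb : d < b)
    (p : ((Point m × ZMod 2) × (Point m × ZMod 2)) ×
      ((Point m × ZMod 2) × (Point m × ZMod 2)))
    (hp : p ∈ (anchF a ×ˢ anchF b) ×ˢ (anchF c ×ˢ anchF d)) :
    (((anchF a ×ˢ anchF b) ×ˢ (anchF c ×ˢ anchF d)).filter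
      fun p' => phi4 p' = phi4 p).card = 2 ^ (1 + 2) := by
  have hab : a < b := had.trans hdb
  have hcd : c < d := hca.trans had
  have hcb : c < b := hcd.trans hdb
  simp only [anchF, Finset.mem_product, Finset.mem_filter, Finset.mem_univ, true_and] at hp
  obtain ⟨⟨h1, h2⟩, h3, h4⟩ := hp
  have hset : (((anchF a ×ˢ anchF b) ×ˢ (anchF c ×ˢ anchF d)).filter
      fun p' => phi4 p' = phi4 p) = Finset.image (mv1 p) Finset.univ := by
    ext p'
    simp only [anchF, Finset.mem_product, Finset.mem_filter, Finset.mem_univ, true_and,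
      Finset.mem_image, Finset.mem_univ, true_and]
    constructor
    · rintro ⟨⟨⟨h1', h2'⟩, h3', h4'⟩, hphi⟩
      obtain ⟨s, r, e, e1, e3, e21, e22, e41, e42⟩ :=
        fiber4_1 hca had hdb h1 h2 h3 h4 h1' h2' h3' h4' (fun u => congrFun hphi u)
      exact ⟨(s, r, e), Prod.ext (Prod.ext e1.symm (Prod.ext e21.symm e22.symm))
        (Prod.ext e3.symm (Prod.ext e41.symm e42.symm))⟩
    · rintro ⟨z, rfl⟩
      refine ⟨⟨⟨h1, anchP_add (anchP_add h2 h1 hab z.1) h3 hcb z.2.1⟩, h3,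
        anchP_add (anchP_add h4 h1 had z.2.1) h3 hcd z.2.2⟩, ?_⟩
      funext u
      simp only [phi4, phi2, mv1, afF_mv1M, afF_mv1P]
      exact z_prod1 _ _ _ _ _ _ _
  rw [hset]
  rw [Finset.card_image_of_injective _ ?_, Finset.card_univ]
  · simp
  · intro z z' h
    have h2a := congrFun (congrArg (fun r => r.1.2.1) h) a
    have h4a := congrFun (congrArg (fun r => r.2.2.1) h) a
    have h4c := congrFun (congrArg (fun r => r.2.2.1) h) c
    simp only [mv1, Pi.add_apply, Pi.smul_apply, smul_eq_mul, h1.1, h3.1,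
      h3.2 a hca] at h2a h4a h4c
    have hs : z.1 = z'.1 := zi1 _ _ _ _ _ h2a
    have hr : z.2.1 = z'.2.1 := zi1 _ _ _ _ _ h4a
    rw [hr] at h4c
    have he : z.2.2 = z'.2.2 := zi2 _ _ _ _ _ h4c
    exact Prod.ext hs (Prod.ext hr he)

def mv2 (p : ((Point m × ZMod 2) × (Point m × ZMod 2)) ×
    ((Point m × ZMod 2) × (Point m × ZMod 2))) (z : ZMod 2 × ZMod 2 × ZMod 2 × ZMod 2) :
    ((Point m × ZMod 2) × (Point m × ZMod 2)) ×
    ((Point m × ZMod 2) × (Point m × ZMod 2)) :=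
  ((p.1.1, (p.1.2.1 + z.1 • p.2.2.1 + z.2.1 • p.2.1.1 + z.2.2.2 • p.1.1.1,
      p.1.2.2 + z.1 * p.2.2.2 + z.2.1 * p.2.1.2 + z.2.1 * z.1 + z.2.2.2 * (p.1.1.2 + 1))),
   ((p.2.1.1 + z.1 • p.1.1.1, p.2.1.2 + z.1 * p.1.1.2),
    (p.2.2.1 + z.2.1 • p.1.1.1 + z.2.2.1 • (p.2.1.1 + z.1 • p.1.1.1),
      p.2.2.2 + z.2.1 * p.1.1.2 + z.2.2.1 * (p.2.1.2 + z.1 * p.1.1.2 + 1))))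

set_option maxHeartbeats 2000000 in
lemma fibcard4_2 {a b c d : Fin m} (hac : a < c) (hcd : c < d) (hdb : d < b)
    (p : ((Point m × ZMod 2) × (Point m × ZMod 2)) ×
      ((Point m × ZMod 2) × (Point m × ZMod 2)))
    (hp : p ∈ (anchF a ×ˢ anchF b) ×ˢ (anchF c ×ˢ anchF d)) :
    (((anchF a ×ˢ anchF b) ×ˢ (anchF c ×ˢ anchF d)).filter
      fun p' => phi4 p' = phi4 p).card = 2 ^ (2 + 2) := by
  have had : a < d := hac.trans hcd
  have hab : a < b := had.trans hdb
  have hcb : c < b := hcd.trans hdb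
  simp only [anchF, Finset.mem_product, Finset.mem_filter, Finset.mem_univ, true_and] at hp
  obtain ⟨⟨h1, h2⟩, h3, h4⟩ := hp
  have hset : (((anchF a ×ˢ anchF b) ×ˢ (anchF c ×ˢ anchF d)).filter
      fun p' => phi4 p' = phi4 p) = Finset.image (mv2 p) Finset.univ := by
    ext p'
    simp only [anchF, Finset.mem_product, Finset.mem_filter, Finset.mem_univ, true_and,
      Finset.mem_image, Finset.mem_univ, true_and]
    constructor
    · rintro ⟨⟨⟨h1', h2'⟩, h3', h4'⟩, hphi⟩
      obtain ⟨t, σ, ρ, e, e1, e31, e32, e41, e42, e21, e22⟩ :=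
        fiber4_2 hac hcd hdb h1 h2 h3 h4 h1' h2' h3' h4' (fun u => congrFun hphi u)
      exact ⟨(t, σ, ρ, e), Prod.ext (Prod.ext e1.symm (Prod.ext e21.symm e22.symm))
        (Prod.ext (Prod.ext e31.symm e32.symm) (Prod.ext e41.symm e42.symm))⟩
    · rintro ⟨z, rfl⟩
      refine ⟨⟨⟨h1, anchP_add (anchP_add (anchP_add h2 h4 hdb z.1) h3 hcb z.2.1) h1 hab
        z.2.2.2⟩, anchP_add h3 h1 hac z.1,
        anchP_add (anchP_add h4 h1 had z.2.1) (anchP_add h3 h1 hac z.1) hcd z.2.2.1⟩, ?_⟩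
      funext u
      show afF p.1.1 u * afF (p.1.2.1 + z.1 • p.2.2.1 + z.2.1 • p.2.1.1 + z.2.2.2 • p.1.1.1,
            p.1.2.2 + z.1 * p.2.2.2 + z.2.1 * p.2.1.2 + z.2.1 * z.1
              + z.2.2.2 * (p.1.1.2 + 1)) u
          + afF (p.2.1.1 + z.1 • p.1.1.1, p.2.1.2 + z.1 * p.1.1.2) u *
            afF (p.2.2.1 + z.2.1 • p.1.1.1 + z.2.2.1 • (p.2.1.1 + z.1 • p.1.1.1),
              p.2.2.2 + z.2.1 * p.1.1.2 + z.2.2.1 * (p.2.1.2 + z.1 * p.1.1.2 + 1)) u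
          = afF p.1.1 u * afF p.1.2 u + afF p.2.1 u * afF p.2.2 u
      rw [afF_mv2M z.1 z.2.1 z.2.2.2 u, afF_mv2N z.1 u, afF_mv2P z.1 z.2.1 z.2.2.1 u]
      exact z_prod2 _ _ _ _ _ _ _ _
  rw [hset]
  rw [Finset.card_image_of_injective _ ?_, Finset.card_univ]
  · simp
  · intro z z' h
    have h3a := congrFun (congrArg (fun r => r.2.1.1) h) a
    have h4c := congrFun (congrArg (fun r => r.2.2.1) h) c
    have h4a := congrFun (congrArg (fun r => r.2.2.1) h) a
    have h2a := congrFun (congrArg (fun r => r.1.2.1) h) a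
    simp only [mv2, Pi.add_apply, Pi.smul_apply, smul_eq_mul, h1.1, h3.1,
      h1.2 c hac] at h3a h4c h4a h2a
    have ht : z.1 = z'.1 := zi0 _ _ _ h3a
    have hρ : z.2.2.1 = z'.2.2.1 := zi3 _ _ _ _ _ _ _ h4c
    rw [ht, hρ] at h4a
    have hσ : z.2.1 = z'.2.1 := zi4 _ _ _ _ _ h4a
    rw [ht, hσ] at h2a
    have he : z.2.2.2 = z'.2.2.2 := zi0 _ _ _ h2a
    exact Prod.ext ht (Prod.ext hσ (Prod.ext hρ he))

end Aux

/-- cardinality of the Minkowski sum of the orbits of two coprime degree-2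
monomials: `2^(α_{f,g}) · |LTA(m,2)·f + LTA(m,2)·g| = |LTA(m,2)·f| · |LTA(m,2)·g|`. -/
theorem stmt11 (m : ℕ) (hm : 1 ≤ m) (i₁ i₂ j₁ j₂ : Fin m)
    (hi : i₁ < i₂) (hj : j₁ < j₂)
    (hcop : ({i₁, i₂} : Finset (Fin m)) ∩ {j₁, j₂} = ∅) (hij : j₂ < i₂) :
    2 ^ (if j₂ < i₁ then 0 else if i₁ < j₁ then 2 else 1) *
        (orbit m (monFn m {i₁, i₂}) + orbit m (monFn m {j₁, j₂})).ncard =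
      (orbit m (monFn m {i₁, i₂})).ncard * (orbit m (monFn m {j₁, j₂})).ncard := by
  have h11 : i₁ ≠ j₁ := by
    intro h
    have hmem : i₁ ∈ ({i₁, i₂} : Finset (Fin m)) ∩ {j₁, j₂} := by simp [h]
    rw [hcop] at hmem
    exact absurd hmem (Finset.notMem_empty _)
  have h12 : i₁ ≠ j₂ := by
    intro h
    have hmem : i₁ ∈ ({i₁, i₂} : Finset (Fin m)) ∩ {j₁, j₂} := by simp [h]
    rw [hcop] at hmem
    exact absurd hmem (Finset.notMem_empty _)
  by_cases h0 : j₂ < i₁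
  · rw [if_pos h0]
    exact main_count hi hj hij 0 (fun p hp => fibcard4_0 hi hj hij h0 p hp)
  · rw [if_neg h0]
    by_cases h2 : i₁ < j₁
    · rw [if_pos h2]
      exact main_count hi hj hij 2 (fun p hp => fibcard4_2 h2 hj hij p hp)
    · rw [if_neg h2]
      have hji : j₁ < i₁ := lt_of_le_of_ne (not_lt.mp h2) (Ne.symm h11)
      have hij2 : i₁ < j₂ := lt_of_le_of_ne (not_lt.mp h0) h12
      exact main_count hi hj hij 1 (fun p hp => fibcard4_1 hji hij2 hij p hp)
end

section
/- Let I ⊆ M_m be a decreasing monomial set with r = max_{f∈I} deg(f), and let f,g ∈ I_r with h = gcd(f,g) of degree r−2. Then |LTA(m,2)_h·h · (LTA(m,2)_f·(f/h) + LTA(m,2)_g·(g/h))| = |LTA(m,2)_h·h| · |LTA(m,2)_f·(f/h) + LTA(m,2)_g·(g/h)|. -/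
open Finset Pointwise

/-!
Write `h = gcd(f, g)`. Every element of `LTA(m,2)_h · h` is a product `∏_{i ∈ h} ℓ_i` of
affine forms `ℓ_i = x_i + (terms in the variables outside h)`, while every element `d` of the
sum set only involves the variables outside `h`. Fixing those variables, `∏ ℓ_i` takes the
value 1 at exactly one point of the fibre, so `a · d` determines `d`, and on `{d = 1}` it
determines the affine forms `ℓ_i + x_i`. When `h ≠ ∅`, `d = ℓℓ' + kk'` with four affine forms
that are independent by triangularity, so `{d = 1}` is a quadric whose points sum by threes to
every point of `F_2^m`; an affine function vanishing on it vanishes identically, hence `a` is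
determined as well.
-/

open Function

lemma zmod_two_eq_zero_or_eq_one (x : ZMod 2) : x = 0 ∨ x = 1 := by decide +revert

lemma zmod_two_eq_one_of_mul_eq_one {x y : ZMod 2} (h : x * y = 1) : y = 1 := by
  decide +revert

lemma zmod_two_prod_eq_one_iff {ι : Type*} {s : Finset ι} {t : ι → ZMod 2} :
    ∏ i ∈ s, t i = 1 ↔ ∀ i ∈ s, t i = 1 := by
  refine ⟨fun hp i hi => ?_, Finset.prod_eq_one⟩
  rcases zmod_two_eq_zero_or_eq_one (t i) with h0 | h1
  · simp [Finset.prod_eq_zero hi h0] at hp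
  · exact h1

section AffMap

variable {m : ℕ} {S T : Finset (Fin m)} {B : Fin m → Fin m → ZMod 2} {ε : Point m}
  {u v : Point m} {i : Fin m}

lemma affMap_add_affMap_eq_sum (B : Fin m → Fin m → ZMod 2) (ε : Point m) (u v : Point m)
    (i : Fin m) :
    affMap m B ε u i + affMap m B ε v i = ∑ j, B i j * (u j + v j) := by
  simp only [affMap, mul_add, Finset.sum_add_distrib]
  linear_combination CharTwo.add_self_eq_zero (ε i)

lemma affMap_add_add (B : Fin m → Fin m → ZMod 2) (ε : Point m) (u v w : Point m) (i : Fin m) :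
    affMap m B ε (u + v + w) i = affMap m B ε u i + affMap m B ε v i + affMap m B ε w i := by
  simp only [affMap, Pi.add_apply, mul_add, Finset.sum_add_distrib]
  linear_combination -CharTwo.add_self_eq_zero (ε i)

lemma IsLT.affMap_add_affMap (hB : IsLT m B) (huv : ∀ j < i, u j = v j) :
    affMap m B ε u i + affMap m B ε v i = u i + v i := by
  rw [affMap_add_affMap_eq_sum, Finset.sum_eq_single i _ (by simp), hB.1 i, one_mul]
  intro j _ hji
  rcases hji.lt_or_gt with hlt | hgt
  · rw [huv j hlt, CharTwo.add_self_eq_zero, mul_zero]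
  · rw [hB.2 i j hgt, zero_mul]

lemma IsLTsub.affMap_add_affMap (hB : IsLTsub m S B ε) (huv : Set.EqOn u v (↑S)ᶜ)
    (i : Fin m) : affMap m B ε u i + affMap m B ε v i = u i + v i := by
  rw [affMap_add_affMap_eq_sum, Finset.sum_eq_single i _ (by simp), hB.1.1 i, one_mul]
  intro j _ hji
  by_cases hj : j ∈ S
  · rw [hB.2.2 i j hji (Or.inr hj), zero_mul]
  · rw [huv hj, CharTwo.add_self_eq_zero, mul_zero]

lemma IsLTsub.affMap_eq_affMap (hB : IsLTsub m S B ε) (hTS : T ⊆ S) (hi : i ∈ S \ T)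
    (huv : Set.EqOn u v (↑T)ᶜ) : affMap m B ε u i = affMap m B ε v i := by
  rw [← CharTwo.add_eq_zero, affMap_add_affMap_eq_sum]
  refine Finset.sum_eq_zero fun j _ => ?_
  by_cases hj : j ∈ T
  · have hji : j ≠ i := by rintro rfl; exact (Finset.mem_sdiff.1 hi).2 hj
    rw [hB.2.2 i j hji (Or.inr (hTS hj)), zero_mul]
  · rw [huv hj, CharTwo.add_self_eq_zero, mul_zero]

lemma IsLTsub.exists_eqOn_affMap_eq_one (hB : IsLTsub m S B ε) (u : Point m) :
    ∃ u', Set.EqOn u' u (↑S)ᶜ ∧ ∀ i ∈ S, affMap m B ε u' i = 1 := by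
  classical
  set u' : Point m := fun j => if j ∈ S then u j + affMap m B ε u j + 1 else u j
  have hoff : Set.EqOn u' u (↑S)ᶜ := fun j hj => if_neg hj
  refine ⟨u', hoff, fun i hi => ?_⟩
  have hsum := hB.affMap_add_affMap hoff i
  simp only [u', if_pos hi] at hsum
  linear_combination hsum + CharTwo.add_self_eq_zero (u i)

end AffMap

section Orbit

variable {m : ℕ} {h S T : Finset (Fin m)} {B : Fin m → Fin m → ZMod 2} {ε : Point m}

def IndepOf (h : Finset (Fin m)) (P : Fn m) : Prop :=
  ∀ ⦃u v : Point m⦄, Set.EqOn u v (↑h)ᶜ → P u = P v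

lemma IndepOf.add {P Q : Fn m} (hP : IndepOf h P) (hQ : IndepOf h Q) : IndepOf h (P + Q) :=
  fun _ _ huv => congrArg₂ (· + ·) (hP huv) (hQ huv)

lemma act_monFn_apply (B : Fin m → Fin m → ZMod 2) (ε : Point m) (S : Finset (Fin m))
    (u : Point m) : act m B ε (monFn m S) u = ∏ i ∈ S, affMap m B ε u i := rfl

lemma IsLTsub.indepOf_act_monFn_sdiff (hB : IsLTsub m S B ε) (hTS : T ⊆ S) :
    IndepOf T (act m B ε (monFn m (S \ T))) := fun u v huv => by
  simp only [act_monFn_apply]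
  exact Finset.prod_congr rfl fun _ hi => hB.affMap_eq_affMap hTS hi huv

lemma exists_eqOn_apply_eq_one_of_mem_orbitSub {a : Fn m} (ha : a ∈ orbitSub m h (monFn m h))
    (u : Point m) : ∃ u', Set.EqOn u' u (↑h)ᶜ ∧ a u' = 1 := by
  obtain ⟨B, ε, hB, rfl⟩ := ha
  obtain ⟨u', hoff, hone⟩ := hB.exists_eqOn_affMap_eq_one u
  exact ⟨u', hoff, zmod_two_prod_eq_one_iff.2 hone⟩

lemma IndepOf.apply_eq_one_of_mul_eq_mul {a a' d d' : Fn m}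
    (ha : a ∈ orbitSub m h (monFn m h)) (hd : IndepOf h d) (hd' : IndepOf h d')
    (he : a * d = a' * d') {u : Point m} (hu : d u = 1) : d' u = 1 := by
  obtain ⟨u', hoff, hau'⟩ := exists_eqOn_apply_eq_one_of_mem_orbitSub ha u
  have hprod : a' u' * d' u' = 1 := by
    rw [← Pi.mul_apply, ← he, Pi.mul_apply, hau', hd hoff, hu, one_mul]
  rw [← hd' hoff]
  exact zmod_two_eq_one_of_mul_eq_one hprod

lemma IndepOf.eq_of_mul_eq_mul {a a' d d' : Fn m}
    (ha : a ∈ orbitSub m h (monFn m h)) (ha' : a' ∈ orbitSub m h (monFn m h))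
    (hd : IndepOf h d) (hd' : IndepOf h d') (he : a * d = a' * d') : d = d' := by
  funext u
  rcases zmod_two_eq_zero_or_eq_one (d u) with h0 | h1
  · rcases zmod_two_eq_zero_or_eq_one (d' u) with h0' | h1'
    · rw [h0, h0']
    · simp [hd'.apply_eq_one_of_mul_eq_mul ha' hd he.symm h1'] at h0
  · rw [h1, hd.apply_eq_one_of_mul_eq_mul ha hd' he h1]

lemma IndepOf.eq_of_mul_eq_mul_of_preimage_add_add_eq_univ {a a' d : Fn m}
    (ha : a ∈ orbitSub m h (monFn m h)) (ha' : a' ∈ orbitSub m h (monFn m h))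
    (hd : IndepOf h d) (hsum : d ⁻¹' {1} + d ⁻¹' {1} + d ⁻¹' {1} = Set.univ)
    (he : a * d = a' * d) : a = a' := by
  obtain ⟨B, ε, hB, rfl⟩ := ha
  obtain ⟨B', ε', hB', rfl⟩ := ha'
  suffices key : ∀ i ∈ h, ∀ u, affMap m B ε u i + affMap m B' ε' u i = 0 from
    funext fun u => Finset.prod_congr rfl fun i hi => CharTwo.add_eq_zero.1 (key i hi u)
  intro i hi
  have hvanish : ∀ w, d w = 1 → affMap m B ε w i + affMap m B' ε' w i = 0 := by
    intro w hw
    obtain ⟨w', hoff, hone⟩ := hB.exists_eqOn_affMap_eq_one w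
    have hone' : affMap m B' ε' w' i = 1 := by
      have hprod : act m B' ε' (monFn m h) w' * d w' = 1 := by
        rw [← Pi.mul_apply, ← he, Pi.mul_apply, act_monFn_apply,
          zmod_two_prod_eq_one_iff.2 hone, hd hoff, hw, one_mul]
      rw [hd hoff, hw, mul_one, act_monFn_apply, zmod_two_prod_eq_one_iff] at hprod
      exact hprod i hi
    have e := hB.affMap_add_affMap hoff.symm i
    have e' := hB'.affMap_add_affMap hoff.symm i
    rw [hone i hi] at e
    rw [hone'] at e'
    exact CharTwo.add_eq_zero.2 (add_right_cancel (e.trans e'.symm))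
  intro u
  obtain ⟨_, ⟨u₁, h₁, u₂, h₂, rfl⟩, u₃, h₃, rfl⟩ := hsum.symm ▸ Set.mem_univ u
  rw [affMap_add_add, affMap_add_add]
  linear_combination hvanish u₁ h₁ + hvanish u₂ h₂ + hvanish u₃ h₃

end Orbit

section Quadric

variable {m : ℕ}

lemma injective_of_add_eq_add_of_forall_lt {Ψ : Point m → Point m}
    (hΨ : ∀ i u v, (∀ j < i, u j = v j) → Ψ u i + Ψ v i = u i + v i) : Injective Ψ := by
  intro u v huv
  funext i
  induction i using WellFoundedLT.induction with
  | ind i ih => rw [← CharTwo.add_eq_zero, ← hΨ i u v ih, huv, CharTwo.add_self_eq_zero]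

lemma preimage_monFn_add_monFn_add_add_eq_univ {F G : Finset (Fin m)} (hF : F.card = 2)
    (hG : G.card = 2) (hFG : Disjoint F G) :
    let P := monFn m F + monFn m G
    P ⁻¹' {1} + P ⁻¹' {1} + P ⁻¹' {1} = Set.univ := by
  refine Set.eq_univ_of_forall fun z => ?_
  obtain ⟨i₁, i₂, hi, rfl⟩ := Finset.card_eq_two.1 hF
  obtain ⟨j₁, j₂, hj, rfl⟩ := Finset.card_eq_two.1 hG
  simp only [Finset.disjoint_insert_left, Finset.disjoint_insert_right,
    Finset.disjoint_singleton, Finset.mem_insert, Finset.mem_singleton, not_or] at hFG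
  set e : Fin 4 → Fin m := ![i₁, i₂, j₁, j₂]
  have he : Injective e := by
    intro k l hkl
    fin_cases k <;> fin_cases l <;> simp_all [e, eq_comm]
  have hquad : ∀ y : Fin 4 → ZMod 2, ∃ a b c : Fin 4 → ZMod 2, a 0 * a 1 + a 2 * a 3 = 1 ∧
      b 0 * b 1 + b 2 * b 3 = 1 ∧ c 0 * c 1 + c 2 * c 3 = 1 ∧ a + b + c = y := by
    decide
  obtain ⟨a, b, c, ha, hb, hc, habc⟩ := hquad (z ∘ e)
  have hval : ∀ (y : Fin 4 → ZMod 2) (t : Point m),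
      (monFn m {i₁, i₂} + monFn m {j₁, j₂}) (extend e y t) =
        y 0 * y 1 + y 2 * y 3 := by
    intro y t
    simp only [Pi.add_apply, monFn, Finset.prod_pair hi, Finset.prod_pair hj]
    rw [show i₁ = e 0 from rfl, show i₂ = e 1 from rfl, show j₁ = e 2 from rfl,
      show j₂ = e 3 from rfl, he.extend_apply, he.extend_apply, he.extend_apply,
      he.extend_apply]
  refine ⟨_, ⟨extend e a z, by simp [hval, ha], extend e b 0, by simp [hval, hb], rfl⟩,
    extend e c 0, by simp [hval, hc], ?_⟩
  show extend e a z + extend e b 0 + extend e c 0 = z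
  rw [← extend_add, ← extend_add, add_zero, add_zero, habc]
  funext i
  by_cases hi : ∃ k, e k = i
  · obtain ⟨k, rfl⟩ := hi
    exact he.extend_apply _ _ k
  · exact extend_apply' _ _ _ hi

lemma preimage_comp_add_add_eq_univ {P : Fn m} {Ψ : Point m → Point m} (hΨ : Injective Ψ)
    (hadd : ∀ u v w, Ψ (u + v + w) = Ψ u + Ψ v + Ψ w)
    (hP : P ⁻¹' {1} + P ⁻¹' {1} + P ⁻¹' {1} = Set.univ) :
    (P ∘ Ψ) ⁻¹' {1} + (P ∘ Ψ) ⁻¹' {1} + (P ∘ Ψ) ⁻¹' {1} = Set.univ := by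
  have hΨ' : Surjective Ψ := Finite.injective_iff_surjective.1 hΨ
  refine Set.eq_univ_of_forall fun u => ?_
  obtain ⟨_, ⟨s₁, h₁, s₂, h₂, rfl⟩, s₃, h₃, hs⟩ := hP.symm ▸ Set.mem_univ (Ψ u)
  obtain ⟨u₁, rfl⟩ := hΨ' s₁
  obtain ⟨u₂, rfl⟩ := hΨ' s₂
  obtain ⟨u₃, rfl⟩ := hΨ' s₃
  refine ⟨_, ⟨u₁, h₁, u₂, h₂, rfl⟩, u₃, h₃, hΨ ?_⟩
  rw [hadd]
  exact hs

lemma act_monFn_add_act_monFn_eq_comp {F G : Finset (Fin m)} (hFG : Disjoint F G)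
    (B B' : Fin m → Fin m → ZMod 2) (ε ε' : Point m) :
    act m B ε (monFn m F) + act m B' ε' (monFn m G) =
      (monFn m F + monFn m G) ∘ fun u => F.piecewise (affMap m B ε u) (affMap m B' ε' u) := by
  funext u
  simp only [Pi.add_apply, comp_apply, act_monFn_apply, monFn]
  congr 1 <;> refine Finset.prod_congr rfl fun i hi => ?_
  · rw [Finset.piecewise_eq_of_mem _ _ _ hi]
  · rw [Finset.piecewise_eq_of_notMem _ _ _ (Finset.disjoint_right.1 hFG hi)]

lemma preimage_act_monFn_add_act_monFn_add_add_eq_univ {F G : Finset (Fin m)}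
    (hF : F.card = 2) (hG : G.card = 2) (hFG : Disjoint F G) {B B' : Fin m → Fin m → ZMod 2}
    (hB : IsLT m B) (hB' : IsLT m B') (ε ε' : Point m) :
    let d := act m B ε (monFn m F) + act m B' ε' (monFn m G)
    d ⁻¹' {1} + d ⁻¹' {1} + d ⁻¹' {1} = Set.univ := by
  intro d
  rw [show d = _ from act_monFn_add_act_monFn_eq_comp hFG B B' ε ε']
  refine preimage_comp_add_add_eq_univ ?_ ?_
    (preimage_monFn_add_monFn_add_add_eq_univ hF hG hFG)
  · refine injective_of_add_eq_add_of_forall_lt fun i u v huv => ?_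
    by_cases hi : i ∈ F
    · simp only [Finset.piecewise_eq_of_mem _ _ _ hi]
      exact hB.affMap_add_affMap huv
    · simp only [Finset.piecewise_eq_of_notMem _ _ _ hi]
      exact hB'.affMap_add_affMap huv
  · intro u v w
    funext i
    by_cases hi : i ∈ F <;> simp [Finset.piecewise, hi, affMap_add_add]

end Quadric

lemma Set.ncard_mul_of_injOn {α : Type*} [Mul α] {s t : Set α}
    (h : Set.InjOn (fun p : α × α => p.1 * p.2) (s ×ˢ t)) :
    (s * t).ncard = s.ncard * t.ncard := by
  rw [← Set.image2_mul, ← Set.image_prod, h.ncard_image, Set.ncard_prod]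

lemma orbitSub_monFn_empty (m : ℕ) : orbitSub m ∅ (monFn m ∅) = {1} := by
  refine Set.eq_singleton_iff_unique_mem.2
    ⟨⟨fun i j => if i = j then 1 else 0, 0, ?_, ?_⟩, ?_⟩
  · refine ⟨⟨fun i => if_pos rfl, fun i j hij => if_neg hij.ne⟩, fun _ _ => rfl,
      fun i j hji _ => if_neg hji.symm⟩
  · funext u; simp [act_monFn_apply]
  · rintro _ ⟨B, ε, -, rfl⟩
    funext u
    simp [act_monFn_apply]

lemma injOn_mul_orbitSub_inter {m : ℕ} {f g : Finset (Fin m)} (hf : (f \ (f ∩ g)).card = 2)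
    (hg : (g \ (f ∩ g)).card = 2) :
    Set.InjOn (fun p : Fn m × Fn m => p.1 * p.2)
      (orbitSub m (f ∩ g) (monFn m (f ∩ g)) ×ˢ
        (orbitSub m f (monFn m (f \ (f ∩ g))) + orbitSub m g (monFn m (g \ (f ∩ g))))) := by
  rintro ⟨a, d⟩ ⟨ha, hd⟩ ⟨a', d'⟩ ⟨ha', hd'⟩ he
  dsimp only at ha ha' he ⊢
  obtain ⟨_, ⟨B, ε, hB, rfl⟩, _, ⟨C, η, hC, rfl⟩, rfl⟩ := Set.mem_add.1 hd
  obtain ⟨_, ⟨B', ε', hB', rfl⟩, _, ⟨C', η', hC', rfl⟩, rfl⟩ := Set.mem_add.1 hd'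
  have hind := (hB.indepOf_act_monFn_sdiff Finset.inter_subset_left).add
    (hC.indepOf_act_monFn_sdiff Finset.inter_subset_right)
  have hind' := (hB'.indepOf_act_monFn_sdiff Finset.inter_subset_left).add
    (hC'.indepOf_act_monFn_sdiff Finset.inter_subset_right)
  have hdd := hind.eq_of_mul_eq_mul ha ha' hind' he
  rw [← hdd] at he
  have hdisj : Disjoint (f \ (f ∩ g)) (g \ (f ∩ g)) := by
    rw [Finset.sdiff_inter_self_left, Finset.sdiff_inter_self_right]
    exact disjoint_sdiff_sdiff
  refine Prod.ext (hind.eq_of_mul_eq_mul_of_preimage_add_add_eq_univ ha ha'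
    (preimage_act_monFn_add_act_monFn_add_add_eq_univ hf hg hdisj hB.1 hC.1 ε η) he) hdd

theorem stmt12_general (m : ℕ) (r : ℕ)
    (f g : Finset (Fin m))
    (hfr : f.card = r) (hgr : g.card = r) (hh : (f ∩ g).card = r - 2) :
    (orbitSub m (f ∩ g) (monFn m (f ∩ g)) *
        (orbitSub m f (monFn m (f \ (f ∩ g))) +
          orbitSub m g (monFn m (g \ (f ∩ g))))).ncard =
      (orbitSub m (f ∩ g) (monFn m (f ∩ g))).ncard *
        (orbitSub m f (monFn m (f \ (f ∩ g))) +
          orbitSub m g (monFn m (g \ (f ∩ g)))).ncard := by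
  rcases (f ∩ g).eq_empty_or_nonempty with hfg | hfg
  · rw [hfg, orbitSub_monFn_empty, Set.ncard_singleton, Set.singleton_one, one_mul, one_mul]
  · have hcard : ∀ s, f ∩ g ⊆ s → s.card = r → (s \ (f ∩ g)).card = 2 := by
      intro s hs hsr
      have := hfg.card_pos
      rw [Finset.card_sdiff_of_subset hs]
      omega
    exact Set.ncard_mul_of_injOn (injOn_mul_orbitSub_inter
      (hcard f Finset.inter_subset_left hfr) (hcard g Finset.inter_subset_right hgr))

/-- the cardinality of the product set is the product of the cardinalities. -/
theorem stmt12 (m : ℕ) (hm : 1 ≤ m) (I : Set (Finset (Fin m))) (hdec : Decreasing m I)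
    (r : ℕ) (hub : ∀ f ∈ I, f.card ≤ r) (hmax : ∃ f ∈ I, f.card = r)
    (f g : Finset (Fin m)) (hf : f ∈ I) (hg : g ∈ I)
    (hfr : f.card = r) (hgr : g.card = r) (hh : (f ∩ g).card = r - 2) :
    (orbitSub m (f ∩ g) (monFn m (f ∩ g)) *
        (orbitSub m f (monFn m (f \ (f ∩ g))) +
          orbitSub m g (monFn m (g \ (f ∩ g))))).ncard =
      (orbitSub m (f ∩ g) (monFn m (f ∩ g))).ncard *
        (orbitSub m f (monFn m (f \ (f ∩ g))) +
          orbitSub m g (monFn m (g \ (f ∩ g)))).ncard :=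
  stmt12_general m r f g hfr hgr hh
end
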